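/- arXiv:1405.6502 — 4 statements merged into one kernel-verified Lean document; each statement's English description precedes it below -/
import Mathlib

section
/- Let X be an L-space and f: T → X order-Henstock integrable. Then f is Bochner integrable with respect to μ. -/
open MeasureTheory Set Filter
open ENNReal

/-- A tagged partition of the set `A`: finitely many pairwise disjoint measurable
sets covering `A`, each with a tag point. -/
structure TaggedPart (T : Type*) [MeasurableSpace T] (A : Set T) where
  k : ℕ
  E : Fin k → Set T
  tag : Fin k → T
  meas : ∀ i, MeasurableSet (E i)
  disj : ∀ i j, i ≠ j → Disjoint (E i) (E j)
  cover : (⋃ i, E i) = A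

namespace TaggedPart

variable {T : Type*} [MeasurableSpace T] {A : Set T}

/-- A Henstock partition: each tag belongs to its set. -/
def IsHenstock (P : TaggedPart T A) : Prop := ∀ i, P.tag i ∈ P.E i

/-- `γ`-fineness: each set is within distance `γ (tag)` of its tag. -/
def IsFine [PseudoMetricSpace T] (γ : T → ℝ) (P : TaggedPart T A) : Prop :=
  ∀ i, ∀ w ∈ P.E i, dist w (P.tag i) < γ (P.tag i)

/-- The Riemann sum `σ(f, P) = ∑ μ(Eᵢ) • f(tᵢ)`. -/
noncomputable def sum {X : Type*} [AddCommMonoid X] [Module ℝ X]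
    (P : TaggedPart T A) (f : T → X) (μ : Measure T) : X :=
  ∑ i, (μ (P.E i)).toReal • f (P.tag i)

end TaggedPart

/-- A gage is a strictly positive function. -/
def IsGage {T : Type*} (γ : T → ℝ) : Prop := ∀ t, 0 < γ t

/-- An (o)-sequence: decreasing with infimum `0`. -/
def IsOSeq {X : Type*} [Lattice X] [AddCommGroup X] (b : ℕ → X) : Prop :=
  Antitone b ∧ IsGLB (Set.range b) 0

section Defs

variable {T : Type*} [MeasurableSpace T] [PseudoMetricSpace T]
  {X : Type*} [NormedAddCommGroup X] [Lattice X] [HasSolidNorm X] [IsOrderedAddMonoid X] [NormedSpace ℝ X]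

/-- Order-Henstock integrability of `f` on `A` with integral `J`. -/
def HasOHIntegralOn (f : T → X) (μ : Measure T) (A : Set T) (J : X) : Prop :=
  ∃ b : ℕ → X, IsOSeq b ∧ ∃ γ : ℕ → T → ℝ, (∀ n, IsGage (γ n)) ∧
    ∀ n (P : TaggedPart T A), P.IsHenstock → P.IsFine (γ n) →
      |P.sum f μ - J| ≤ b n

/-- Order-McShane (free partition) integrability of `f` on `A` with integral `J`. -/
def HasOMIntegralOn (f : T → X) (μ : Measure T) (A : Set T) (J : X) : Prop :=
  ∃ b : ℕ → X, IsOSeq b ∧ ∃ γ : ℕ → T → ℝ, (∀ n, IsGage (γ n)) ∧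
    ∀ n (P : TaggedPart T A), P.IsFine (γ n) → |P.sum f μ - J| ≤ b n

/-- Order-McShane integrability with a prescribed regulating (o)-sequence `b`. -/
def HasOMIntegralOnWith (f : T → X) (μ : Measure T) (A : Set T) (J : X)
    (b : ℕ → X) : Prop :=
  ∃ γ : ℕ → T → ℝ, (∀ n, IsGage (γ n)) ∧
    ∀ n (P : TaggedPart T A), P.IsFine (γ n) → |P.sum f μ - J| ≤ b n

/-- Norm-Henstock integrability of `f` on `A` with integral `J`. -/
def HasNormHIntegralOn (f : T → X) (μ : Measure T) (A : Set T) (J : X) : Prop :=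
  ∀ ε : ℝ, 0 < ε → ∃ γ : T → ℝ, IsGage γ ∧
    ∀ P : TaggedPart T A, P.IsHenstock → P.IsFine γ → ‖P.sum f μ - J‖ ≤ ε

/-- Norm-McShane (free partition) integrability of `f` on `A` with integral `J`. -/
def HasNormMIntegralOn (f : T → X) (μ : Measure T) (A : Set T) (J : X) : Prop :=
  ∀ ε : ℝ, 0 < ε → ∃ γ : T → ℝ, IsGage γ ∧
    ∀ P : TaggedPart T A, P.IsFine γ → ‖P.sum f μ - J‖ ≤ ε

end Defs


open ENNReal in
theorem _dummy_true : True := trivial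

section LatticeAux
variable {X : Type*} [NormedAddCommGroup X] [Lattice X] [HasSolidNorm X] [IsOrderedAddMonoid X]

/-- sign-choice lemma in lattice ordered groups -/
lemma sum_abs_le_of_pm {ι : Type*} (s : Finset ι) (x : ι → X) (c : X)
    (h : ∀ ε : ι → Bool, (∑ i ∈ s, (if ε i then x i else - x i)) ≤ c) :
    (∑ i ∈ s, |x i|) ≤ c := by
  classical
  induction s using Finset.induction_on generalizing c with
  | empty => simpa using h (fun _ => true)
  | @insert a s ha IH =>
    rw [Finset.sum_insert ha]
    have key : ∀ (v : Bool), (if v then x a else -x a) ≤ c - ∑ i ∈ s, |x i| := by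
      intro v
      have h' : ∀ ε : ι → Bool, (∑ i ∈ s, (if ε i then x i else - x i)) ≤ c - (if v then x a else -x a) := by
        intro ε
        have h2 := h (Function.update ε a v)
        rw [Finset.sum_insert ha, Function.update_self] at h2
        have heq : (∑ i ∈ s, (if Function.update ε a v i then x i else - x i))
            = ∑ i ∈ s, (if ε i then x i else - x i) := by
          refine Finset.sum_congr rfl (fun i hi => ?_)
          have hia : i ≠ a := fun hia => ha (hia ▸ hi)
          rw [Function.update_of_ne hia]
        rw [heq] at h2
        exact le_sub_iff_add_le'.mpr h2
      have h3 := IH _ h'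
      exact le_sub_iff_add_le'.mpr (le_sub_iff_add_le.mp h3)
    have habs : |x a| ≤ c - ∑ i ∈ s, |x i| := abs_le'.mpr ⟨key true, key false⟩
    exact le_sub_iff_add_le.mp habs

/-- additivity of the norm on nonnegative elements, finite sums -/
lemma norm_sum_eq_of_nonneg (hL : ∀ x y : X, 0 ≤ x → 0 ≤ y → ‖x + y‖ = ‖x‖ + ‖y‖)
    {ι : Type*} (s : Finset ι) (x : ι → X) (hx : ∀ i ∈ s, 0 ≤ x i) :
    ‖∑ i ∈ s, x i‖ = ∑ i ∈ s, ‖x i‖ := by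
  classical
  induction s using Finset.induction_on with
  | empty => simp
  | @insert a s ha IH =>
    rw [Finset.sum_insert ha, Finset.sum_insert ha,
      hL _ _ (hx a (Finset.mem_insert_self a s)) (Finset.sum_nonneg (fun i hi => hx i (Finset.mem_insert_of_mem hi))),
      IH (fun i hi => hx i (Finset.mem_insert_of_mem hi))]

/-- the norms of an (o)-sequence tend to `0` in an L-space -/
lemma oseq_norm_tendsto [CompleteSpace X]
    (hL : ∀ x y : X, 0 ≤ x → 0 ≤ y → ‖x + y‖ = ‖x‖ + ‖y‖)
    {b : ℕ → X} (hb : IsOSeq b) :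
    Tendsto (fun n => ‖b n‖) atTop (nhds 0) := by
  have hnn : ∀ n, 0 ≤ b n := fun n => hb.2.1 (Set.mem_range_self n)
  have hdiff : ∀ {m n : ℕ}, m ≤ n → ‖b m - b n‖ = ‖b m‖ - ‖b n‖ := by
    intro m n hmn
    have h1 : ‖(b m - b n) + b n‖ = ‖b m - b n‖ + ‖b n‖ :=
      hL _ _ (sub_nonneg.mpr (hb.1 hmn)) (hnn n)
    rw [sub_add_cancel] at h1
    rw [h1]; ring
  have hanti : Antitone (fun n => ‖b n‖) := by
    intro m n hmn
    have := hdiff hmn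
    have h0 : 0 ≤ ‖b m - b n‖ := norm_nonneg _
    simp only at this ⊢
    linarith
  have hrc : ∃ r : ℝ, Tendsto (fun n => ‖b n‖) atTop (nhds r) := by
    refine ⟨⨅ n, ‖b n‖, tendsto_atTop_ciInf hanti ⟨0, ?_⟩⟩
    rintro r ⟨n, rfl⟩; exact norm_nonneg _
  obtain ⟨r, hr⟩ := hrc
  -- b is Cauchy
  have hcb : CauchySeq b := by
    rw [Metric.cauchySeq_iff]
    intro ε hε
    have hcr : CauchySeq (fun n => ‖b n‖) := hr.cauchySeq
    rw [Metric.cauchySeq_iff] at hcr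
    obtain ⟨N, hN⟩ := hcr ε hε
    refine ⟨N, fun n hn m hm => ?_⟩
    rcases le_total m n with hmn | hmn
    · rw [dist_eq_norm, ← norm_neg, neg_sub, hdiff hmn]
      have := hN m hm n hn
      rw [Real.dist_eq, abs_sub_comm] at this
      exact lt_of_le_of_lt (le_abs_self _) (by rwa [abs_sub_comm] at this)
    · rw [dist_eq_norm, hdiff hmn]
      have := hN n hn m hm
      rw [Real.dist_eq] at this
      exact lt_of_le_of_lt (le_abs_self _) this
  obtain ⟨x, hx⟩ := cauchySeq_tendsto_of_complete hcb
  -- x = 0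
  have hx0 : x = 0 := by
    have hlb : x ∈ lowerBounds (Set.range b) := by
      rintro y ⟨m, rfl⟩
      refine le_of_tendsto hx ?_
      filter_upwards [eventually_ge_atTop m] with n hn
      exact hb.1 hn
    have h1 : x ≤ 0 := hb.2.2 hlb
    have h2 : 0 ≤ x := ge_of_tendsto hx (Eventually.of_forall hnn)
    exact le_antisymm h1 h2
  have := (continuous_norm.tendsto x).comp hx
  rw [hx0, norm_zero] at this
  exact this
end LatticeAux

section PartAux
variable {T : Type*} [MeasurableSpace T] {A : Set T}

/-- Build a `TaggedPart` from a family indexed by an arbitrary `Fintype`. -/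
noncomputable def TaggedPart.ofFintype (ι : Type*) [Fintype ι] (E : ι → Set T) (tag : ι → T)
    (meas : ∀ i, MeasurableSet (E i)) (disj : ∀ i j, i ≠ j → Disjoint (E i) (E j))
    (cover : (⋃ i, E i) = A) : TaggedPart T A where
  k := Fintype.card ι
  E := E ∘ (Fintype.equivFin ι).symm
  tag := tag ∘ (Fintype.equivFin ι).symm
  meas i := meas _
  disj i j hij := disj _ _ (fun h => hij ((Fintype.equivFin ι).symm.injective h))
  cover := by
    rw [← cover]
    exact (Fintype.equivFin ι).symm.surjective.iUnion_comp E

lemma TaggedPart.sum_ofFintype {X : Type*} [AddCommMonoid X] [Module ℝ X]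
    (ι : Type*) [Fintype ι] (E : ι → Set T) (tag : ι → T)
    (meas : ∀ i, MeasurableSet (E i)) (disj : ∀ i j, i ≠ j → Disjoint (E i) (E j))
    (cover : (⋃ i, E i) = A) (f : T → X) (μ : Measure T) :
    (TaggedPart.ofFintype ι E tag meas disj cover).sum f μ
      = ∑ i : ι, (μ (E i)).toReal • f (tag i) := by
  rw [TaggedPart.sum]
  exact Fintype.sum_equiv (Fintype.equivFin ι).symm _ _ (fun i => rfl)

lemma TaggedPart.isHenstock_ofFintype (ι : Type*) [Fintype ι] (E : ι → Set T) (tag : ι → T)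
    (meas : ∀ i, MeasurableSet (E i)) (disj : ∀ i j, i ≠ j → Disjoint (E i) (E j))
    (cover : (⋃ i, E i) = A) (h : ∀ i, tag i ∈ E i) :
    (TaggedPart.ofFintype ι E tag meas disj cover).IsHenstock := fun i => h _

lemma TaggedPart.isFine_ofFintype [PseudoMetricSpace T] (γ : T → ℝ) (ι : Type*) [Fintype ι]
    (E : ι → Set T) (tag : ι → T)
    (meas : ∀ i, MeasurableSet (E i)) (disj : ∀ i j, i ≠ j → Disjoint (E i) (E j))
    (cover : (⋃ i, E i) = A)
    (h : ∀ i, ∀ w ∈ E i, dist w (tag i) < γ (tag i)) :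
    (TaggedPart.ofFintype ι E tag meas disj cover).IsFine γ := fun i => h _

end PartAux

section Cousin
variable {T : Type*} [MetricSpace T] [CompactSpace T] [MeasurableSpace T] [BorelSpace T]

/-- Cousin's lemma: a γ-fine Henstock partition of `univ` exists for every gage. -/
lemma exists_fine_henstock (γ : T → ℝ) (hγ : IsGage γ) :
    ∃ P : TaggedPart T (univ : Set T), P.IsHenstock ∧ P.IsFine γ := by
  classical
  have hcov : (univ : Set T) ⊆ ⋃ t : T, Metric.ball t (γ t) := by
    intro x _
    exact mem_iUnion.mpr ⟨x, Metric.mem_ball_self (hγ x)⟩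
  obtain ⟨s, hs⟩ := isCompact_univ.elim_finite_subcover (fun t : T => Metric.ball t (γ t))
    (fun t => Metric.isOpen_ball) hcov
  set k := s.card with hk
  set pt : Fin k → T := fun i => (s.equivFin.symm i : T) with hpt
  have hptinj : Function.Injective pt := fun i j hij => by
    have := Subtype.val_injective hij
    exact s.equivFin.symm.injective this
  have hptmem : ∀ i, pt i ∈ s := fun i => (s.equivFin.symm i).2
  set B : ℕ → Set T := fun n => if h : n < k then Metric.ball (pt ⟨n, h⟩) (γ (pt ⟨n, h⟩)) else ∅ with hB
  set SS : Set T := Set.range pt with hSS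
  have hSSfin : SS.Finite := Set.finite_range pt
  set E : Fin k → Set T := fun i => (disjointed B i \ SS) ∪ {pt i} with hE
  have hEmeas : ∀ i, MeasurableSet (E i) := by
    intro i
    apply MeasurableSet.union
    · apply MeasurableSet.diff
      · apply MeasurableSet.disjointed
        intro n
        by_cases hn : n < k
        · rw [hB]; simp only [dif_pos hn]
          exact Metric.isOpen_ball.measurableSet
        · rw [hB]; simp only [dif_neg hn]
          exact MeasurableSet.empty
      · exact hSSfin.countable.measurableSet
    · exact measurableSet_singleton _
  have hEdisj : ∀ i j : Fin k, i ≠ j → Disjoint (E i) (E j) := by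
    intro i j hij
    rw [Set.disjoint_left]
    rintro x (⟨hx1, hx2⟩ | hx) hxj
    · rcases hxj with ⟨hy1, _⟩ | hy
      · exact (disjoint_disjointed B (fun h => hij (Fin.val_injective h))).le_bot ⟨hx1, hy1⟩
      · exact hx2 (hy ▸ Set.mem_range_self j)
    · rcases hxj with ⟨_, hy2⟩ | hy
      · exact hy2 (hx ▸ Set.mem_range_self i)
      · exact hij (hptinj (by rw [← hx, ← hy]))
  have hdisjB : ∀ n, disjointed B n ⊆ B n := fun n => disjointed_subset B n
  have hEcover : (⋃ i, E i) = (univ : Set T) := by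
    apply Set.eq_univ_of_forall
    intro x
    by_cases hxS : x ∈ SS
    · obtain ⟨i, rfl⟩ := hxS
      exact mem_iUnion.mpr ⟨i, Or.inr rfl⟩
    · have hx : x ∈ ⋃ n, B n := by
        have := hs (Set.mem_univ x)
        rw [Set.mem_iUnion₂] at this
        obtain ⟨t, hts, hxt⟩ := this
        set i := s.equivFin ⟨t, hts⟩ with hi
        have hpti : pt i = t := by
          show (↑(s.equivFin.symm (s.equivFin ⟨t, hts⟩)) : T) = t
          rw [Equiv.symm_apply_apply]
        refine mem_iUnion.mpr ⟨(i : ℕ), ?_⟩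
        rw [hB]
        simp only
        rw [dif_pos i.2]
        have : (⟨(i : ℕ), i.2⟩ : Fin k) = i := by
          apply Fin.ext; rfl
        rw [this, hpti]
        exact hxt
      rw [← iUnion_disjointed] at hx
      obtain ⟨n, hn⟩ := mem_iUnion.mp hx
      have hnk : n < k := by
        by_contra hnk
        have := hdisjB n hn
        rw [hB] at this
        simp only [dif_neg hnk] at this
        exact this
      refine mem_iUnion.mpr ⟨⟨n, hnk⟩, Or.inl ⟨hn, hxS⟩⟩
  refine ⟨TaggedPart.ofFintype (Fin k) E pt hEmeas hEdisj hEcover, ?_, ?_⟩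
  · exact TaggedPart.isHenstock_ofFintype _ _ _ _ _ _ (fun i => Or.inr rfl)
  · apply TaggedPart.isFine_ofFintype
    rintro i w (⟨hw1, _⟩ | hw)
    · have := hdisjB i hw1
      rw [hB] at this
      simp only [dif_pos i.2] at this
      have hieq : (⟨(i : ℕ), i.2⟩ : Fin k) = i := by apply Fin.ext; rfl
      rw [hieq] at this
      exact this
    · rw [hw, dist_self]
      exact hγ _
end Cousin


section Core
variable {T : Type*} [MetricSpace T] [CompactSpace T] [MeasurableSpace T] [BorelSpace T]
  {X : Type*} [NormedAddCommGroup X] [Lattice X] [HasSolidNorm X] [IsOrderedAddMonoid X] [NormedSpace ℝ X]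

/-- Key estimate: for a finite disjoint family of fine tagged pieces subordinate to a fine
Henstock partition, the total deviation is order-bounded. -/
lemma core_abs_sum (μ : Measure T) [IsFiniteMeasure μ] (f : T → X) (J B : X) (g : T → ℝ)
    (hbound : ∀ Q : TaggedPart T (univ : Set T), Q.IsHenstock → Q.IsFine g → |Q.sum f μ - J| ≤ B)
    (P : TaggedPart T (univ : Set T)) (hPH : P.IsHenstock) (hPF : P.IsFine g)
    {ι : Type*} (F : Finset ι) (C : ι → Set T) (idx : ι → Fin P.k) (s : ι → T)
    (hmeas : ∀ l ∈ F, MeasurableSet (C l))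
    (hsub : ∀ l ∈ F, C l ⊆ P.E (idx l))
    (hstag : ∀ l ∈ F, s l ∈ C l)
    (hfine : ∀ l ∈ F, ∀ w ∈ C l, dist w (s l) < g (s l))
    (havoid : ∀ l ∈ F, P.tag (idx l) ∉ C l)
    (hdisj : (F : Set ι).Pairwise (Function.onFun Disjoint C)) :
    ∑ l ∈ F, |(μ (C l)).toReal • (f (s l) - f (P.tag (idx l)))| ≤ B + B + (B + B) := by
  classical
  set x : ι → X := fun l => (μ (C l)).toReal • (f (s l) - f (P.tag (idx l))) with hx
  have key : ∀ F' : Finset ι, F' ⊆ F → |∑ l ∈ F', x l| ≤ B + B := by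
    intro F' hF'
    set U : Set T := ⋃ l ∈ F', C l with hU
    have hUmeas : MeasurableSet U :=
      F'.measurableSet_biUnion (fun l hl => hmeas l (hF' hl))
    -- the merged partition
    set E' : (Fin P.k ⊕ {l // l ∈ F'}) → Set T :=
      Sum.elim (fun i => P.E i \ U) (fun l => C l.1) with hE'
    set tag' : (Fin P.k ⊕ {l // l ∈ F'}) → T := Sum.elim P.tag (fun l => s l.1) with htag'
    have htagU : ∀ i, P.tag i ∉ U := by
      intro i hiU
      rw [hU, Set.mem_iUnion₂] at hiU
      obtain ⟨l, hl, hmem⟩ := hiU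
      by_cases hidx : idx l = i
      · exact havoid l (hF' hl) (hidx ▸ hmem)
      · have h1 : P.tag i ∈ P.E (idx l) := hsub l (hF' hl) hmem
        have h2 : P.tag i ∈ P.E i := hPH i
        exact (P.disj _ _ hidx).le_bot ⟨h1, h2⟩
    have hmeas' : ∀ j, MeasurableSet (E' j) := by
      rintro (i | l)
      · exact (P.meas i).diff hUmeas
      · exact hmeas l.1 (hF' l.2)
    have hdisj' : ∀ j j', j ≠ j' → Disjoint (E' j) (E' j') := by
      rintro (i | l) (i' | l') hne
      · exact Disjoint.mono diff_subset diff_subset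
          (P.disj i i' (fun h => hne (by rw [h])))
      · refine Set.disjoint_left.mpr (fun a ha ha' => ?_)
        exact ha.2 (Set.mem_biUnion l'.2 ha')
      · refine Set.disjoint_left.mpr (fun a ha ha' => ?_)
        exact ha'.2 (Set.mem_biUnion l.2 ha)
      · refine hdisj (hF' l.2) (hF' l'.2) (fun h => hne ?_)
        have : l = l' := Subtype.ext h
        rw [this]
    have hcover' : (⋃ j, E' j) = (univ : Set T) := by
      apply Set.eq_univ_of_forall
      intro a
      by_cases haU : a ∈ U
      · rw [hU, Set.mem_iUnion₂] at haU
        obtain ⟨l, hl, hmem⟩ := haU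
        exact Set.mem_iUnion.mpr ⟨Sum.inr ⟨l, hl⟩, hmem⟩
      · have : a ∈ ⋃ i, P.E i := by rw [P.cover]; trivial
        obtain ⟨i, hi⟩ := Set.mem_iUnion.mp this
        exact Set.mem_iUnion.mpr ⟨Sum.inl i, hi, haU⟩
    set Q := TaggedPart.ofFintype _ E' tag' hmeas' hdisj' hcover' with hQ
    have hQH : Q.IsHenstock := by
      apply TaggedPart.isHenstock_ofFintype
      rintro (i | l)
      · exact ⟨hPH i, htagU i⟩
      · exact hstag l.1 (hF' l.2)
    have hQF : Q.IsFine g := by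
      apply TaggedPart.isFine_ofFintype
      rintro (i | l) w hw
      · exact hPF i w hw.1
      · exact hfine l.1 (hF' l.2) w hw
    -- compute the sum of Q
    have hsumQ : Q.sum f μ = ∑ i, (μ (P.E i \ U)).toReal • f (P.tag i)
        + ∑ l ∈ F', (μ (C l)).toReal • f (s l) := by
      rw [hQ, TaggedPart.sum_ofFintype, Fintype.sum_sum_type]
      congr 1
      rw [← Finset.sum_coe_sort F' (fun l => (μ (C l)).toReal • f (s l))]
      rfl
    have hμi : ∀ i, (μ (P.E i \ U)).toReal
        = (μ (P.E i)).toReal - ∑ l ∈ F'.filter (fun l => idx l = i), (μ (C l)).toReal := by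
      intro i
      have h1 := measure_diff_add_inter (μ := μ) (P.E i) hUmeas
      have h2 : P.E i ∩ U = ⋃ l ∈ F'.filter (fun l => idx l = i), C l := by
        ext a
        constructor
        · rintro ⟨haE, haU⟩
          rw [hU, Set.mem_iUnion₂] at haU
          obtain ⟨l, hl, hmem⟩ := haU
          have hidx : idx l = i := by
            by_contra hidx
            exact (P.disj _ _ hidx).le_bot ⟨hsub l (hF' hl) hmem, haE⟩
          exact Set.mem_biUnion (Finset.mem_filter.mpr ⟨hl, hidx⟩) hmem
        · intro ha
          rw [Set.mem_iUnion₂] at ha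
          obtain ⟨l, hl, hmem⟩ := ha
          obtain ⟨hlF, hidx⟩ := Finset.mem_filter.mp hl
          exact ⟨hidx ▸ hsub l (hF' hlF) hmem, Set.mem_biUnion hlF hmem⟩
      have h3 : μ (P.E i ∩ U) = ∑ l ∈ F'.filter (fun l => idx l = i), μ (C l) := by
        rw [h2]
        refine measure_biUnion_finset ?_ (fun l hl => hmeas l (hF' (Finset.mem_filter.mp hl).1))
        intro a ha b hb hab
        exact hdisj (hF' (Finset.mem_filter.mp (by exact_mod_cast ha)).1)
          (hF' (Finset.mem_filter.mp (by exact_mod_cast hb)).1) hab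
      have h4 : (μ (P.E i \ U)).toReal + (μ (P.E i ∩ U)).toReal = (μ (P.E i)).toReal := by
        rw [← ENNReal.toReal_add (measure_ne_top μ _) (measure_ne_top μ _), h1]
      have h5 : (μ (P.E i ∩ U)).toReal = ∑ l ∈ F'.filter (fun l => idx l = i), (μ (C l)).toReal := by
        rw [h3, ENNReal.toReal_sum (fun l _ => measure_ne_top μ _)]
      linarith
    have hσ : Q.sum f μ - P.sum f μ = ∑ l ∈ F', x l := by
      rw [hsumQ, TaggedPart.sum]
      have e1 : ∑ i, (μ (P.E i \ U)).toReal • f (P.tag i)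
          = ∑ i, (μ (P.E i)).toReal • f (P.tag i)
            - ∑ i, (∑ l ∈ F'.filter (fun l => idx l = i), (μ (C l)).toReal) • f (P.tag i) := by
        rw [← Finset.sum_sub_distrib]
        refine Finset.sum_congr rfl (fun i _ => ?_)
        rw [hμi i, sub_smul]
      have e2 : ∑ i, (∑ l ∈ F'.filter (fun l => idx l = i), (μ (C l)).toReal) • f (P.tag i)
          = ∑ l ∈ F', (μ (C l)).toReal • f (P.tag (idx l)) := by
        have e3 : ∀ i : Fin P.k, (∑ l ∈ F'.filter (fun l => idx l = i), (μ (C l)).toReal) • f (P.tag i)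
            = ∑ l ∈ F'.filter (fun l => idx l = i), (μ (C l)).toReal • f (P.tag (idx l)) := by
          intro i
          rw [Finset.sum_smul]
          refine Finset.sum_congr rfl (fun l hl => ?_)
          rw [(Finset.mem_filter.mp hl).2]
        rw [Finset.sum_congr rfl (fun i _ => e3 i)]
        exact Finset.sum_fiberwise F' (fun l => idx l) (fun l => (μ (C l)).toReal • f (P.tag (idx l)))
      have e5 : ∑ l ∈ F', x l
          = ∑ l ∈ F', (μ (C l)).toReal • f (s l) - ∑ l ∈ F', (μ (C l)).toReal • f (P.tag (idx l)) := by
        rw [← Finset.sum_sub_distrib]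
        exact Finset.sum_congr rfl (fun l _ => smul_sub _ _ _)
      rw [e1, e2, e5]
      abel
    have h6 := hbound Q hQH hQF
    have h7 := hbound P hPH hPF
    rw [← hσ]
    have heq : Q.sum f μ - P.sum f μ = (Q.sum f μ - J) + -(P.sum f μ - J) := by abel
    rw [heq]
    refine le_trans (abs_add_le _ _) ?_
    rw [abs_neg]
    exact add_le_add h6 h7
  -- now the sign trick
  refine sum_abs_le_of_pm F x _ (fun ε => ?_)
  have hsplit : ∑ l ∈ F, (if ε l then x l else - x l)
      = ∑ l ∈ F.filter (fun l => ε l), x l - ∑ l ∈ F.filter (fun l => ¬ (ε l = true)), x l := by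
    rw [Finset.sum_ite, Finset.sum_neg_distrib, sub_eq_add_neg]
  rw [hsplit]
  have k1 := key _ (Finset.filter_subset (fun l => ε l = true) F)
  have k2 := key _ (Finset.filter_subset (fun l => ¬ (ε l = true)) F)
  calc ∑ l ∈ F.filter (fun l => ε l), x l - ∑ l ∈ F.filter (fun l => ¬ (ε l = true)), x l
      ≤ |∑ l ∈ F.filter (fun l => ε l), x l| + |∑ l ∈ F.filter (fun l => ¬ (ε l = true)), x l| := by
        rw [sub_eq_add_neg]
        exact add_le_add (le_abs_self _) (neg_le_abs _)
    _ ≤ (B + B) + (B + B) := add_le_add k1 k2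
end Core

section Core2
variable {T : Type*} [MetricSpace T] [CompactSpace T] [MeasurableSpace T] [BorelSpace T]
  {X : Type*} [NormedAddCommGroup X] [Lattice X] [HasSolidNorm X] [IsOrderedAddMonoid X] [NormedSpace ℝ X]

lemma core_tsum (μ : Measure T) [IsFiniteMeasure μ]
    (hL : ∀ x y : X, 0 ≤ x → 0 ≤ y → ‖x + y‖ = ‖x‖ + ‖y‖)
    (f : T → X) (J B : X) (hB : 0 ≤ B) (g : T → ℝ)
    (hbound : ∀ Q : TaggedPart T (univ : Set T), Q.IsHenstock → Q.IsFine g → |Q.sum f μ - J| ≤ B)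
    (P : TaggedPart T (univ : Set T)) (hPH : P.IsHenstock) (hPF : P.IsFine g)
    {ι : Type*} [Countable ι] (C : ι → Set T) (idx : ι → Fin P.k) (s : ι → T)
    (hmeas : ∀ l, MeasurableSet (C l))
    (hsub : ∀ l, C l ⊆ P.E (idx l))
    (hstag : ∀ l, s l ∈ C l)
    (hfine : ∀ l, ∀ w ∈ C l, dist w (s l) < g (s l))
    (havoid : ∀ l, P.tag (idx l) ∉ C l)
    (hdisj : Pairwise (Function.onFun Disjoint C)) :
    ∑' l, μ (C l) * (‖f (s l) - f (P.tag (idx l))‖₊ : ℝ≥0∞) ≤ ENNReal.ofReal (4 * ‖B‖) := by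
  rw [ENNReal.tsum_eq_iSup_sum]
  refine iSup_le (fun F => ?_)
  have h1 := core_abs_sum μ f J B g hbound P hPH hPF F C idx s
    (fun l _ => hmeas l) (fun l _ => hsub l) (fun l _ => hstag l) (fun l _ => hfine l)
    (fun l _ => havoid l) (fun a _ b _ hab => hdisj hab)
  set x : ι → X := fun l => (μ (C l)).toReal • (f (s l) - f (P.tag (idx l))) with hx
  have hsnn : (0 : X) ≤ ∑ l ∈ F, |x l| := Finset.sum_nonneg (fun l _ => abs_nonneg _)
  have h4nn : (0 : X) ≤ B + B + (B + B) := by positivity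
  have h2 : ‖∑ l ∈ F, |x l|‖ ≤ ‖B + B + (B + B)‖ := by
    refine norm_le_norm_of_abs_le_abs ?_
    rw [abs_of_nonneg hsnn, abs_of_nonneg h4nn]
    exact h1
  have h3 : ‖B + B + (B + B)‖ ≤ 4 * ‖B‖ := by
    have := norm_add_le (B + B) (B + B)
    have h' := norm_add_le B B
    linarith
  have h4 : ∑ l ∈ F, ‖x l‖ ≤ 4 * ‖B‖ := by
    have e1 : ‖∑ l ∈ F, |x l|‖ = ∑ l ∈ F, ‖|x l|‖ :=
      norm_sum_eq_of_nonneg hL F _ (fun l _ => abs_nonneg _)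
    have e2 : ∀ l ∈ F, ‖|x l|‖ = ‖x l‖ := fun l _ => norm_abs_eq_norm _
    rw [Finset.sum_congr rfl e2] at e1
    rw [← e1]
    exact le_trans h2 h3
  have h5 : ∀ l, μ (C l) * (‖f (s l) - f (P.tag (idx l))‖₊ : ℝ≥0∞) = ENNReal.ofReal (‖x l‖) := by
    intro l
    rw [hx]
    have e3 : ‖(μ (C l)).toReal • (f (s l) - f (P.tag (idx l)))‖
        = (μ (C l)).toReal * ‖f (s l) - f (P.tag (idx l))‖ := by
      rw [norm_smul, Real.norm_eq_abs, abs_of_nonneg ENNReal.toReal_nonneg]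
    rw [e3, ENNReal.ofReal_mul ENNReal.toReal_nonneg,
      ENNReal.ofReal_toReal (measure_ne_top μ _), ← coe_nnnorm, ENNReal.ofReal_coe_nnreal]
  calc ∑ l ∈ F, μ (C l) * (‖f (s l) - f (P.tag (idx l))‖₊ : ℝ≥0∞)
      = ∑ l ∈ F, ENNReal.ofReal (‖x l‖) := Finset.sum_congr rfl (fun l _ => h5 l)
    _ = ENNReal.ofReal (∑ l ∈ F, ‖x l‖) := (ENNReal.ofReal_sum_of_nonneg (fun l _ => norm_nonneg _)).symm
    _ ≤ ENNReal.ofReal (4 * ‖B‖) := ENNReal.ofReal_le_ofReal h4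

lemma core_tsum_surgery (μ : Measure T) [IsFiniteMeasure μ]
    (hL : ∀ x y : X, 0 ≤ x → 0 ≤ y → ‖x + y‖ = ‖x‖ + ‖y‖)
    (f : T → X) (J B : X) (hB : 0 ≤ B) (g : T → ℝ) (hg : IsGage g)
    (hbound : ∀ Q : TaggedPart T (univ : Set T), Q.IsHenstock → Q.IsFine g → |Q.sum f μ - J| ≤ B)
    (P : TaggedPart T (univ : Set T)) (hPH : P.IsHenstock) (hPF : P.IsFine g)
    {ι : Type*} [Countable ι] (D : ι → Set T) (idx : ι → Fin P.k) (s : ι → T)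
    (hmeas : ∀ l, MeasurableSet (D l))
    (hsub : ∀ l, D l ⊆ P.E (idx l))
    (hNA : ∀ l, ∀ x ∈ D l, μ {x} = 0)
    (hsE : ∀ l, s l ∈ P.E (idx l))
    (hsNA : ∀ l, μ {s l} = 0)
    (hsinj : Function.Injective s)
    (hstagne : ∀ l, s l ≠ P.tag (idx l))
    (hfine : ∀ l, ∀ w ∈ D l, dist w (s l) < g (s l))
    (hdisj : Pairwise (Function.onFun Disjoint D)) :
    ∑' l, μ (D l) * (‖f (s l) - f (P.tag (idx l))‖₊ : ℝ≥0∞) ≤ ENNReal.ofReal (4 * ‖B‖) := by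
  classical
  set S : Set T := Set.range s ∪ Set.range P.tag with hS
  have hScount : S.Countable := (Set.countable_range s).union (Set.countable_range P.tag)
  set C : ι → Set T := fun l => (D l \ S) ∪ {s l} with hC
  have hDS : ∀ l, μ (D l ∩ S) = 0 := by
    intro l
    have hcnt : (D l ∩ S).Countable := hScount.mono inter_subset_right
    have heq : D l ∩ S = ⋃ x ∈ D l ∩ S, ({x} : Set T) := (Set.biUnion_of_singleton _).symm
    rw [heq]
    exact (measure_biUnion_null_iff hcnt).mpr (fun x hx => hNA l x hx.1)
  have hCeq : ∀ l, μ (C l) = μ (D l) := by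
    intro l
    have h1 : μ (D l \ S) = μ (D l) := measure_diff_null' (hDS l)
    apply le_antisymm
    · calc μ (C l) ≤ μ (D l \ S) + μ {s l} := measure_union_le _ _
        _ = μ (D l) := by rw [hsNA l, add_zero, h1]
    · rw [← h1]
      exact measure_mono subset_union_left
  have hmain := core_tsum μ hL f J B hB g hbound P hPH hPF C idx s
    (fun l => ((hmeas l).diff hScount.measurableSet).union (measurableSet_singleton _))
    (fun l => Set.union_subset ((Set.diff_subset).trans (hsub l))
      (Set.singleton_subset_iff.mpr (hsE l)))
    (fun l => Set.mem_union_right _ rfl)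
    (by
      rintro l w (⟨hw, _⟩ | hw)
      · exact hfine l w hw
      · rw [Set.mem_singleton_iff] at hw
        rw [hw, dist_self]
        exact hg _)
    (by
      intro l hmem
      rcases hmem with ⟨_, hnotS⟩ | hmem
      · exact hnotS (Set.mem_union_right _ (Set.mem_range_self _))
      · rw [Set.mem_singleton_iff] at hmem
        exact hstagne l hmem.symm)
    (by
      intro a b hab
      rw [Function.onFun, hC]
      rw [Set.disjoint_left]
      rintro w (⟨hw1, hw2⟩ | hw) hmem'
      · rcases hmem' with ⟨hw1', _⟩ | hw'
        · exact (hdisj hab).le_bot ⟨hw1, hw1'⟩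
        · rw [Set.mem_singleton_iff] at hw'
          exact hw2 (hw' ▸ Set.mem_union_left _ (Set.mem_range_self _))
      · rcases hmem' with ⟨_, hw2'⟩ | hw'
        · rw [Set.mem_singleton_iff] at hw
          exact hw2' (hw ▸ Set.mem_union_left _ (Set.mem_range_self _))
        · rw [Set.mem_singleton_iff] at hw hw'
          exact hab (hsinj (by rw [← hw, ← hw']))
      )
  calc ∑' l, μ (D l) * (‖f (s l) - f (P.tag (idx l))‖₊ : ℝ≥0∞)
      = ∑' l, μ (C l) * (‖f (s l) - f (P.tag (idx l))‖₊ : ℝ≥0∞) := by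
        refine tsum_congr (fun l => ?_)
        rw [hCeq l]
    _ ≤ ENNReal.ofReal (4 * ‖B‖) := hmain

end Core2

universe uT in
/-- Countable covering of an arbitrary subset of `R` by disjoint measurable pieces,
each inside a γ-ball centered at a point of `W`. -/
lemma exists_pieces {T : Type uT} [MetricSpace T] [CompactSpace T] [MeasurableSpace T]
    [BorelSpace T] (γ : T → ℝ) (hγ : IsGage γ) (R W : Set T) (hR : MeasurableSet R)
    (hWR : W ⊆ R) :
    ∃ (ι : Type uT) (_ : Countable ι) (D : ι → Set T) (s : ι → T),
      (∀ l, MeasurableSet (D l)) ∧ Pairwise (Function.onFun Disjoint D) ∧ (∀ l, D l ⊆ R) ∧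
      (∀ l, s l ∈ W) ∧ Function.Injective s ∧ (∀ l, ∀ w ∈ D l, dist w (s l) < γ (s l)) ∧
      W ⊆ ⋃ l, D l := by
  classical
  obtain ⟨t, htc, htU⟩ := TopologicalSpace.isOpen_iUnion_countable
    (fun w : W => Metric.ball (w : T) (γ w)) (fun _ => Metric.isOpen_ball)
  haveI : Countable ↥t := htc.to_subtype
  obtain ⟨enc, henc⟩ := Countable.exists_injective_nat ↥t
  set sf : ↥t → T := fun l => ((l : ↥W) : T) with hsf
  have hsfW : ∀ l, sf l ∈ W := fun l => ((l : ↥W)).2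
  set D : ↥t → Set T := fun l => (R ∩ Metric.ball (sf l) (γ (sf l))) \
      ⋃ (l' : ↥t) (_ : enc l' < enc l), Metric.ball (sf l') (γ (sf l')) with hD
  refine ⟨↥t, inferInstance, D, sf, ?_, ?_, ?_, hsfW, ?_, ?_, ?_⟩
  · intro l
    refine (hR.inter Metric.isOpen_ball.measurableSet).diff ?_
    exact MeasurableSet.iUnion (fun l' => MeasurableSet.iUnion
      (fun _ => Metric.isOpen_ball.measurableSet))
  · intro a b hab
    rcases Nat.lt_or_ge (enc a) (enc b) with h | h
    · rw [Function.onFun, Set.disjoint_left]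
      intro w hwa hwb
      exact hwb.2 (Set.mem_iUnion.mpr ⟨a, Set.mem_iUnion.mpr ⟨h, hwa.1.2⟩⟩)
    · have h' : enc b < enc a := lt_of_le_of_ne h (fun he => hab (henc he.symm))
      rw [Function.onFun, Set.disjoint_left]
      intro w hwa hwb
      exact hwa.2 (Set.mem_iUnion.mpr ⟨b, Set.mem_iUnion.mpr ⟨h', hwb.1.2⟩⟩)
  · intro l
    exact (Set.diff_subset).trans inter_subset_left
  · intro a b hab
    have : (a : ↥W) = (b : ↥W) := Subtype.ext hab
    exact Subtype.ext this
  · intro l w hw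
    exact hw.1.2
  · intro w hw
    have hwball : w ∈ ⋃ l : ↥t, Metric.ball (sf l) (γ (sf l)) := by
      have h1 : w ∈ ⋃ i : ↥W, Metric.ball (i : T) (γ (i : T)) :=
        Set.mem_iUnion.mpr ⟨⟨w, hw⟩, Metric.mem_ball_self (hγ w)⟩
      rw [← htU] at h1
      rw [Set.mem_iUnion₂] at h1
      obtain ⟨i, hit, hmem⟩ := h1
      exact Set.mem_iUnion.mpr ⟨⟨i, hit⟩, hmem⟩
    obtain ⟨l₁, hl₁⟩ := Set.mem_iUnion.mp hwball
    set A : Set ℕ := {n | ∃ l : ↥t, enc l = n ∧ w ∈ Metric.ball (sf l) (γ (sf l))} with hA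
    have hAne : A.Nonempty := ⟨enc l₁, l₁, rfl, hl₁⟩
    haveI : DecidablePred (· ∈ A) := Classical.decPred _
    have hex : ∃ n, n ∈ A := hAne
    set n₀ := Nat.find hex with hn₀
    have hn₀A : n₀ ∈ A := Nat.find_spec hex
    have hn₀min : ∀ m, m ∈ A → n₀ ≤ m := fun m hm => Nat.find_min' hex hm
    obtain ⟨l₀, hl₀enc, hl₀mem⟩ := hn₀A
    refine Set.mem_iUnion.mpr ⟨l₀, ⟨⟨hWR hw, hl₀mem⟩, ?_⟩⟩
    intro hwbad
    rw [Set.mem_iUnion] at hwbad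
    obtain ⟨l', hl'⟩ := hwbad
    rw [Set.mem_iUnion] at hl'
    obtain ⟨hl'lt, hl'mem⟩ := hl'
    have hmemA : enc l' ∈ A := ⟨l', rfl, hl'mem⟩
    have := hn₀min _ hmemA
    rw [hl₀enc] at hl'lt
    omega

section Step
variable {T : Type*} [MetricSpace T] [CompactSpace T] [MeasurableSpace T] [BorelSpace T]
  {X : Type*} [NormedAddCommGroup X] [Lattice X] [HasSolidNorm X] [IsOrderedAddMonoid X] [NormedSpace ℝ X]

/-- The step function associated with a tagged partition. -/
noncomputable def stepFun (P : TaggedPart T (univ : Set T)) (f : T → X) : T → X :=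
  fun x => ∑ i, (P.E i).indicator (fun _ => f (P.tag i)) x

lemma stepFun_sm (P : TaggedPart T (univ : Set T)) (f : T → X) :
    StronglyMeasurable (stepFun P f) := by
  apply Finset.stronglyMeasurable_fun_sum
  intro i _
  exact stronglyMeasurable_const.indicator (P.meas i)

lemma exists_mem_piece (P : TaggedPart T (univ : Set T)) (x : T) : ∃ i, x ∈ P.E i := by
  have hx : x ∈ ⋃ i, P.E i := by rw [P.cover]; trivial
  exact Set.mem_iUnion.mp hx

lemma stepFun_eq (P : TaggedPart T (univ : Set T)) (f : T → X) {x : T} {i : Fin P.k}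
    (hx : x ∈ P.E i) : stepFun P f x = f (P.tag i) := by
  rw [stepFun, Finset.sum_eq_single i]
  · rw [Set.indicator_of_mem hx]
  · intro j _ hj
    refine Set.indicator_of_notMem (fun hxj => ?_) _
    exact (P.disj j i hj).le_bot ⟨hxj, hx⟩
  · intro h
    exact absurd (Finset.mem_univ i) h

lemma stepFun_tag (P : TaggedPart T (univ : Set T)) (hPH : P.IsHenstock) (f : T → X)
    (i : Fin P.k) : stepFun P f (P.tag i) = f (P.tag i) := stepFun_eq P f (hPH i)

lemma stepFun_lintegral_lt_top (μ : Measure T) [IsFiniteMeasure μ]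
    (P : TaggedPart T (univ : Set T)) (f : T → X) :
    ∫⁻ x, (‖stepFun P f x‖₊ : ℝ≥0∞) ∂μ < ∞ := by
  have hbound : ∀ x, (‖stepFun P f x‖₊ : ℝ≥0∞)
      ≤ ∑ i, (P.E i).indicator (fun _ => (‖f (P.tag i)‖₊ : ℝ≥0∞)) x := by
    intro x
    rw [stepFun]
    calc (‖∑ i, (P.E i).indicator (fun _ => f (P.tag i)) x‖₊ : ℝ≥0∞)
        ≤ ∑ i, (‖(P.E i).indicator (fun _ => f (P.tag i)) x‖₊ : ℝ≥0∞) := by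
          rw [← ENNReal.coe_finset_sum]
          exact_mod_cast nnnorm_sum_le _ _
      _ ≤ ∑ i, (P.E i).indicator (fun _ => (‖f (P.tag i)‖₊ : ℝ≥0∞)) x := by
          refine Finset.sum_le_sum (fun i _ => ?_)
          by_cases hx : x ∈ P.E i
          · rw [Set.indicator_of_mem hx, Set.indicator_of_mem hx]
          · rw [Set.indicator_of_notMem hx, Set.indicator_of_notMem hx]
            simp
  calc ∫⁻ x, (‖stepFun P f x‖₊ : ℝ≥0∞) ∂μ
      ≤ ∫⁻ x, ∑ i, (P.E i).indicator (fun _ => (‖f (P.tag i)‖₊ : ℝ≥0∞)) x ∂μ :=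
        lintegral_mono hbound
    _ = ∑ i, ∫⁻ x, (P.E i).indicator (fun _ => (‖f (P.tag i)‖₊ : ℝ≥0∞)) x ∂μ :=
        lintegral_finset_sum _ (fun i _ => measurable_const.indicator (P.meas i))
    _ = ∑ i, (‖f (P.tag i)‖₊ : ℝ≥0∞) * μ (P.E i) := by
        refine Finset.sum_congr rfl (fun i _ => ?_)
        rw [lintegral_indicator (P.meas i)]
        simp
    _ < ∞ := by
        refine ENNReal.sum_lt_top.mpr (fun i _ => ?_)
        exact ENNReal.mul_lt_top ENNReal.coe_lt_top (measure_lt_top μ _)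

lemma atoms_countable (μ : Measure T) [IsFiniteMeasure μ] :
    Set.Countable {x : T | μ {x} ≠ 0} := by
  have h := MeasureTheory.Measure.countable_meas_pos_of_disjoint_iUnion (μ := μ)
    (As := fun x : T => {x}) (fun _ => measurableSet_singleton _)
    (fun x y hxy => by simpa [Set.disjoint_singleton] using hxy)
  refine h.mono (fun x hx => ?_)
  simpa [pos_iff_ne_zero] using hx

/-- The distributional bound, part 1 of the main argument. -/
lemma dist_bound (μ : Measure T) [IsFiniteMeasure μ]
    (hL : ∀ x y : X, 0 ≤ x → 0 ≤ y → ‖x + y‖ = ‖x‖ + ‖y‖)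
    (f : T → X) (J B : X) (hB : 0 ≤ B) (g : T → ℝ) (hg : IsGage g)
    (hbound : ∀ Q : TaggedPart T (univ : Set T), Q.IsHenstock → Q.IsFine g → |Q.sum f μ - J| ≤ B)
    (P : TaggedPart T (univ : Set T)) (hPH : P.IsHenstock) (hPF : P.IsFine g)
    (α : ℝ) (hα : 0 < α) :
    μ {x | α ≤ ‖f x - stepFun P f x‖} ≤ ENNReal.ofReal (8 * ‖B‖) / ENNReal.ofReal α := by
  classical
  set gs := stepFun P f with hgs
  set Z := {x | α ≤ ‖f x - gs x‖} with hZ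
  set A := {x : T | μ {x} ≠ 0} with hA
  have hAc : A.Countable := atoms_countable μ
  have htagZ : ∀ i, P.tag i ∉ Z := by
    intro i hi
    rw [hZ, Set.mem_setOf_eq, hgs, stepFun_tag P hPH f i, sub_self, norm_zero] at hi
    linarith
  choose pieceIdx hpieceIdx using fun x => exists_mem_piece P x
  have hgsval : ∀ x : T, gs x = f (P.tag (pieceIdx x)) := fun x => stepFun_eq P f (hpieceIdx x)
  -- atoms part
  have hZA : μ (Z ∩ A) * ENNReal.ofReal α ≤ ENNReal.ofReal (4 * ‖B‖) := by
    haveI : Countable ↥(Z ∩ A) := (hAc.mono inter_subset_right).to_subtype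
    have hcore := core_tsum μ hL f J B hB g hbound P hPH hPF
      (ι := ↥(Z ∩ A)) (fun a => {(a : T)}) (fun a => pieceIdx (a : T)) (fun a => (a : T))
      (fun _ => measurableSet_singleton _)
      (fun a => Set.singleton_subset_iff.mpr (hpieceIdx _))
      (fun a => rfl)
      (fun a w hw => by rw [Set.mem_singleton_iff] at hw; rw [hw, dist_self]; exact hg _)
      (fun a hmem => by
        rw [Set.mem_singleton_iff] at hmem
        exact htagZ _ (hmem ▸ a.2.1))
      (fun a b hab => by
        rw [Function.onFun, Set.disjoint_singleton]
        exact fun h => hab (Subtype.ext h))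
    have hterm : ∀ a : ↥(Z ∩ A), μ {(a : T)} * ENNReal.ofReal α
        ≤ μ {(a : T)} * (‖f (a : T) - f (P.tag (pieceIdx (a : T)))‖₊ : ℝ≥0∞) := by
      intro a
      refine mul_le_mul_right ?_ _
      rw [← ENNReal.ofReal_coe_nnreal, coe_nnnorm, ← hgsval]
      exact ENNReal.ofReal_le_ofReal a.2.1
    have hcover : Z ∩ A ⊆ ⋃ a : ↥(Z ∩ A), ({(a : T)} : Set T) :=
      fun x hx => Set.mem_iUnion.mpr ⟨⟨x, hx⟩, rfl⟩
    calc μ (Z ∩ A) * ENNReal.ofReal α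
        ≤ μ (⋃ a : ↥(Z ∩ A), ({(a : T)} : Set T)) * ENNReal.ofReal α :=
          mul_le_mul_left (measure_mono hcover) _
      _ ≤ (∑' a : ↥(Z ∩ A), μ {(a : T)}) * ENNReal.ofReal α :=
          mul_le_mul_left (measure_iUnion_le _) _
      _ = ∑' a : ↥(Z ∩ A), μ {(a : T)} * ENNReal.ofReal α := ENNReal.tsum_mul_right.symm
      _ ≤ ∑' a : ↥(Z ∩ A), μ {(a : T)} * (‖f (a : T) - f (P.tag (pieceIdx (a : T)))‖₊ : ℝ≥0∞) :=
          ENNReal.tsum_le_tsum hterm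
      _ ≤ ENNReal.ofReal (4 * ‖B‖) := hcore
  -- non-atomic part
  have hZD : μ (Z \ A) * ENNReal.ofReal α ≤ ENNReal.ofReal (4 * ‖B‖) := by
    have hAm : MeasurableSet A := hAc.measurableSet
    have hpieces : ∀ i : Fin P.k, ∃ (ι : Type _) (_ : Countable ι) (D : ι → Set T) (s : ι → T),
        (∀ l, MeasurableSet (D l)) ∧ Pairwise (Function.onFun Disjoint D) ∧ (∀ l, D l ⊆ P.E i ∩ Aᶜ) ∧
        (∀ l, s l ∈ (Z ∩ P.E i ∩ Aᶜ) \ Set.range P.tag) ∧ Function.Injective s ∧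
        (∀ l, ∀ w ∈ D l, dist w (s l) < g (s l)) ∧
        ((Z ∩ P.E i ∩ Aᶜ) \ Set.range P.tag) ⊆ ⋃ l, D l := by
      intro i
      exact exists_pieces g hg (P.E i ∩ Aᶜ) ((Z ∩ P.E i ∩ Aᶜ) \ Set.range P.tag)
        ((P.meas i).inter hAm.compl)
        (fun x hx => ⟨hx.1.1.2, hx.1.2⟩)
    choose ιf instC D sf hDm hDdisj hDsub hsW hsinj hDfine hcov using hpieces
    haveI : ∀ i, Countable (ιf i) := instC
    have hcore := core_tsum_surgery μ hL f J B hB g hg hbound P hPH hPF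
      (ι := Σ i : Fin P.k, ιf i) (fun p => D p.1 p.2) (fun p => p.1) (fun p => sf p.1 p.2)
      (fun p => hDm p.1 p.2)
      (fun p => (hDsub p.1 p.2).trans inter_subset_left)
      (fun p x hx => by
        have := (hDsub p.1 p.2) hx
        simpa [hA] using this.2)
      (fun p => (hsW p.1 p.2).1.1.2)
      (fun p => by
        have := (hsW p.1 p.2).1.2
        simpa [hA] using this)
      (by
        intro p q heq
        obtain ⟨i, l⟩ := p
        obtain ⟨j, l'⟩ := q
        by_cases hij : i = j
        · subst hij
          have hll : l = l' := hsinj i heq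
          rw [hll]
        · exfalso
          have h1 := (hsW i l).1.1.2
          have h2 := (hsW j l').1.1.2
          have heq' : sf i l = sf j l' := heq
          rw [heq'] at h1
          exact (P.disj i j hij).le_bot ⟨h1, h2⟩)
      (fun p hp => (hsW p.1 p.2).2 ⟨p.1, hp.symm⟩)
      (fun p => hDfine p.1 p.2)
      (by
        rintro ⟨i, l⟩ ⟨j, l'⟩ hne
        by_cases hij : i = j
        · subst hij
          have : l ≠ l' := fun h => hne (by rw [h])
          exact hDdisj i this
        · refine Disjoint.mono ((hDsub i l).trans inter_subset_left)
            ((hDsub j l').trans inter_subset_left) (P.disj i j hij))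
    have hterm : ∀ p : Σ i : Fin P.k, ιf i, μ (D p.1 p.2) * ENNReal.ofReal α
        ≤ μ (D p.1 p.2) * (‖f (sf p.1 p.2) - f (P.tag p.1)‖₊ : ℝ≥0∞) := by
      intro p
      refine mul_le_mul_right ?_ _
      have hsZ : sf p.1 p.2 ∈ Z := (hsW p.1 p.2).1.1.1
      have hsE : sf p.1 p.2 ∈ P.E p.1 := (hsW p.1 p.2).1.1.2
      have : gs (sf p.1 p.2) = f (P.tag p.1) := stepFun_eq P f hsE
      rw [← ENNReal.ofReal_coe_nnreal, coe_nnnorm, ← this]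
      exact ENNReal.ofReal_le_ofReal hsZ
    have hcover : Z \ A ⊆ ⋃ p : Σ i : Fin P.k, ιf i, D p.1 p.2 := by
      intro x hx
      have hxZ : x ∈ Z := hx.1
      have hxA : x ∈ Aᶜ := hx.2
      have hxtag : x ∉ Set.range P.tag := by
        rintro ⟨i, rfl⟩
        exact htagZ i hxZ
      have hxW : x ∈ (Z ∩ P.E (pieceIdx x) ∩ Aᶜ) \ Set.range P.tag :=
        ⟨⟨⟨hxZ, hpieceIdx x⟩, hxA⟩, hxtag⟩
      obtain ⟨l, hl⟩ := Set.mem_iUnion.mp (hcov (pieceIdx x) hxW)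
      exact Set.mem_iUnion.mpr ⟨⟨pieceIdx x, l⟩, hl⟩
    calc μ (Z \ A) * ENNReal.ofReal α
        ≤ μ (⋃ p : Σ i : Fin P.k, ιf i, D p.1 p.2) * ENNReal.ofReal α :=
          mul_le_mul_left (measure_mono hcover) _
      _ ≤ (∑' p : Σ i : Fin P.k, ιf i, μ (D p.1 p.2)) * ENNReal.ofReal α :=
          mul_le_mul_left (measure_iUnion_le _) _
      _ = ∑' p : Σ i : Fin P.k, ιf i, μ (D p.1 p.2) * ENNReal.ofReal α := ENNReal.tsum_mul_right.symm
      _ ≤ ∑' p : Σ i : Fin P.k, ιf i, μ (D p.1 p.2) * (‖f (sf p.1 p.2) - f (P.tag p.1)‖₊ : ℝ≥0∞) :=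
          ENNReal.tsum_le_tsum hterm
      _ ≤ ENNReal.ofReal (4 * ‖B‖) := hcore
  -- combine
  have hcomb : μ Z * ENNReal.ofReal α ≤ ENNReal.ofReal (8 * ‖B‖) := by
    calc μ Z * ENNReal.ofReal α ≤ (μ (Z ∩ A) + μ (Z \ A)) * ENNReal.ofReal α :=
        mul_le_mul_left (measure_le_inter_add_diff μ Z A) _
      _ = μ (Z ∩ A) * ENNReal.ofReal α + μ (Z \ A) * ENNReal.ofReal α := add_mul _ _ _
      _ ≤ ENNReal.ofReal (4 * ‖B‖) + ENNReal.ofReal (4 * ‖B‖) := add_le_add hZA hZD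
      _ = ENNReal.ofReal (8 * ‖B‖) := by
          rw [← ENNReal.ofReal_add (by positivity) (by positivity)]
          ring_nf
  rw [ENNReal.le_div_iff_mul_le (Or.inl (by simpa using hα)) (Or.inl ENNReal.ofReal_ne_top)]
  exact hcomb
end Step

section Fin2
variable {T : Type*} [MetricSpace T] [CompactSpace T] [MeasurableSpace T] [BorelSpace T]
  {X : Type*} [NormedAddCommGroup X] [Lattice X] [HasSolidNorm X] [IsOrderedAddMonoid X] [NormedSpace ℝ X]

lemma finite_integral_part (μ : Measure T) [IsFiniteMeasure μ]
    (hL : ∀ x y : X, 0 ≤ x → 0 ≤ y → ‖x + y‖ = ‖x‖ + ‖y‖)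
    (f : T → X) (J B : X) (hB : 0 ≤ B) (g : T → ℝ) (hg : IsGage g)
    (hbound : ∀ Q : TaggedPart T (univ : Set T), Q.IsHenstock → Q.IsFine g → |Q.sum f μ - J| ≤ B)
    (P : TaggedPart T (univ : Set T)) (hPH : P.IsHenstock) (hPF : P.IsFine g)
    (f' : T → X) (hf'sm : StronglyMeasurable f') (hff' : f =ᵐ[μ] f') :
    ∫⁻ x, (‖f x‖₊ : ℝ≥0∞) ∂μ < ∞ := by
  classical
  set gs := stepFun P f with hgs
  have hgssm : StronglyMeasurable gs := stepFun_sm P f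
  set φ : T → ℝ≥0∞ := fun x => (‖f' x - gs x‖₊ : ℝ≥0∞) with hφ
  have hφm : Measurable φ := (hf'sm.sub hgssm).enorm
  set A := {x : T | μ {x} ≠ 0} with hA
  have hAc : A.Countable := atoms_countable μ
  have hAm : MeasurableSet A := hAc.measurableSet
  choose pieceIdx hpieceIdx using fun x => exists_mem_piece P x
  have hgsval : ∀ x : T, gs x = f (P.tag (pieceIdx x)) := fun x => stepFun_eq P f (hpieceIdx x)
  set K := ENNReal.ofReal (4 * ‖B‖) with hK
  -- layers
  set V : ℤ → Set T := fun m => φ ⁻¹' (Set.Ioc ((2:ℝ≥0∞)^m) (2^(m+1))) with hV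
  have hVm : ∀ m, MeasurableSet (V m) := fun m => hφm measurableSet_Ioc
  have hVdisj : ∀ m m' : ℤ, m ≠ m' → Disjoint (V m) (V m') := by
    have haux : ∀ m m' : ℤ, m < m' → Disjoint (V m) (V m') := by
      intro m m' hmm'
      rw [Set.disjoint_left]
      intro x hx hx'
      have h1 : φ x ≤ (2:ℝ≥0∞)^(m+1) := hx.2
      have h2 : (2:ℝ≥0∞)^m' < φ x := hx'.1
      have h3 : (2:ℝ≥0∞)^(m+1) ≤ (2:ℝ≥0∞)^m' := ENNReal.zpow_le_of_le one_le_two (by omega)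
      exact absurd (lt_of_le_of_lt (h1.trans h3) h2) (lt_irrefl _)
    intro m m' hne
    rcases lt_or_gt_of_ne hne with h | h
    · exact haux m m' h
    · exact (haux m' m h).symm
  -- the atoms majorant
  haveI : Countable ↥(A \ Set.range P.tag) := (hAc.mono diff_subset).to_subtype
  set hAfun : T → ℝ≥0∞ := fun x => ∑' (a : ↥(A \ Set.range P.tag)),
      ({(a : T)} : Set T).indicator (fun _ => (‖f (a : T) - gs (a : T)‖₊ : ℝ≥0∞)) x with hAfundef
  have hAfunm : Measurable hAfun := by
    apply Measurable.ennreal_tsum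
    intro a
    exact measurable_const.indicator (measurableSet_singleton _)
  have hAfunint : ∫⁻ x, hAfun x ∂μ ≤ K := by
    rw [hAfundef]
    rw [lintegral_tsum (fun a => (measurable_const.indicator (measurableSet_singleton _)).aemeasurable)]
    have hcore := core_tsum μ hL f J B hB g hbound P hPH hPF
      (ι := ↥(A \ Set.range P.tag)) (fun a => {(a : T)}) (fun a => pieceIdx (a : T))
      (fun a => (a : T))
      (fun _ => measurableSet_singleton _)
      (fun a => Set.singleton_subset_iff.mpr (hpieceIdx _))
      (fun a => rfl)
      (fun a w hw => by rw [Set.mem_singleton_iff] at hw; rw [hw, dist_self]; exact hg _)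
      (fun a hmem => by
        rw [Set.mem_singleton_iff] at hmem
        exact a.2.2 ⟨pieceIdx (a : T), hmem⟩)
      (fun a b hab => by
        rw [Function.onFun, Set.disjoint_singleton]
        exact fun h => hab (Subtype.ext h))
    refine le_trans (le_of_eq ?_) hcore
    refine tsum_congr (fun a => ?_)
    rw [lintegral_indicator (measurableSet_singleton _)]
    rw [setLIntegral_const]
    rw [hgsval]
    exact mul_comm _ _
  -- the pieces majorant
  have hpieces : ∀ q : Fin P.k × ℤ, ∃ (ι : Type _) (_ : Countable ι) (D : ι → Set T) (s : ι → T),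
      (∀ l, MeasurableSet (D l)) ∧ Pairwise (Function.onFun Disjoint D) ∧
      (∀ l, D l ⊆ V q.2 ∩ P.E q.1 ∩ Aᶜ) ∧
      (∀ l, s l ∈ (V q.2 ∩ P.E q.1 ∩ Aᶜ ∩ {x | f x = f' x}) \ Set.range P.tag) ∧
      Function.Injective s ∧
      (∀ l, ∀ w ∈ D l, dist w (s l) < g (s l)) ∧
      ((V q.2 ∩ P.E q.1 ∩ Aᶜ ∩ {x | f x = f' x}) \ Set.range P.tag) ⊆ ⋃ l, D l := by
    intro q
    exact exists_pieces g hg (V q.2 ∩ P.E q.1 ∩ Aᶜ)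
      ((V q.2 ∩ P.E q.1 ∩ Aᶜ ∩ {x | f x = f' x}) \ Set.range P.tag)
      (((hVm q.2).inter (P.meas q.1)).inter hAm.compl)
      (fun x hx => hx.1.1)
  choose ιf instC D sf hDm hDdisj hDsub hsW hsinj hDfine hcov using hpieces
  haveI : ∀ q, Countable (ιf q) := instC
  have hsfV : ∀ q l, sf q l ∈ V q.2 := fun q l => (hsW q l).1.1.1.1
  have hsfE : ∀ q l, sf q l ∈ P.E q.1 := fun q l => (hsW q l).1.1.1.2
  have hsfA : ∀ q l, sf q l ∈ Aᶜ := fun q l => (hsW q l).1.1.2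
  have hsfeq : ∀ q l, f (sf q l) = f' (sf q l) := fun q l => (hsW q l).1.2
  have hsftag : ∀ q l, sf q l ∉ Set.range P.tag := fun q l => (hsW q l).2
  have hcore := core_tsum_surgery μ hL f J B hB g hg hbound P hPH hPF
    (ι := Σ q : Fin P.k × ℤ, ιf q) (fun p => D p.1 p.2) (fun p => p.1.1) (fun p => sf p.1 p.2)
    (fun p => hDm p.1 p.2)
    (fun p => (hDsub p.1 p.2).trans (inter_subset_left.trans inter_subset_right))
    (fun p x hx => by
      have := ((hDsub p.1 p.2) hx).2
      simpa [hA] using this)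
    (fun p => hsfE p.1 p.2)
    (fun p => by have := hsfA p.1 p.2; simpa [hA] using this)
    (by
      intro p q heq
      obtain ⟨⟨i, m⟩, l⟩ := p
      obtain ⟨⟨j, m'⟩, l'⟩ := q
      have heq' : sf (i, m) l = sf (j, m') l' := heq
      by_cases hi : i = j
      · subst hi
        by_cases hm : m = m'
        · subst hm
          have hll : l = l' := hsinj (i, m) heq'
          rw [hll]
        · exfalso
          have h1 := hsfV (i, m) l
          have h2 := hsfV (i, m') l'
          rw [heq'] at h1
          exact (hVdisj m m' hm).le_bot ⟨h1, h2⟩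
      · exfalso
        have h1 := hsfE (i, m) l
        have h2 := hsfE (j, m') l'
        rw [heq'] at h1
        exact (P.disj i j hi).le_bot ⟨h1, h2⟩)
    (fun p hp => (hsftag p.1 p.2) ⟨p.1.1, hp.symm⟩)
    (fun p => hDfine p.1 p.2)
    (by
      intro p q hne
      obtain ⟨⟨i, m⟩, l⟩ := p
      obtain ⟨⟨j, m'⟩, l'⟩ := q
      by_cases hi : i = j
      · subst hi
        by_cases hm : m = m'
        · subst hm
          have hll : l ≠ l' := by
            intro h
            subst h
            exact hne rfl
          exact hDdisj (i, m) hll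
        · exact Disjoint.mono ((hDsub (i, m) l).trans (inter_subset_left.trans inter_subset_left))
            ((hDsub (i, m') l').trans (inter_subset_left.trans inter_subset_left))
            (hVdisj m m' hm)
      · exact Disjoint.mono ((hDsub (i, m) l).trans (inter_subset_left.trans inter_subset_right))
            ((hDsub (j, m') l').trans (inter_subset_left.trans inter_subset_right))
            (P.disj i j hi))
  set Ψp : T → ℝ≥0∞ := fun x => ∑' (p : Σ q : Fin P.k × ℤ, ιf q),
      (D p.1 p.2).indicator (fun _ => (2:ℝ≥0∞)^(p.1.2 + 1)) x with hΨpdef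
  have hΨpm : Measurable Ψp := by
    apply Measurable.ennreal_tsum
    intro p
    exact measurable_const.indicator (hDm p.1 p.2)
  have hcoeff : ∀ p : Σ q : Fin P.k × ℤ, ιf q,
      (2:ℝ≥0∞)^(p.1.2 + 1) * μ (D p.1 p.2)
        ≤ 2 * (μ (D p.1 p.2) * (‖f (sf p.1 p.2) - f (P.tag p.1.1)‖₊ : ℝ≥0∞)) := by
    intro p
    have hφs : (2:ℝ≥0∞)^(p.1.2) < φ (sf p.1 p.2) := (hsfV p.1 p.2).1
    have hval : (‖f (sf p.1 p.2) - f (P.tag p.1.1)‖₊ : ℝ≥0∞) = φ (sf p.1 p.2) := by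
      have h1 : gs (sf p.1 p.2) = f (P.tag p.1.1) := stepFun_eq P f (hsfE p.1 p.2)
      have h2 : φ (sf p.1 p.2) = (‖f' (sf p.1 p.2) - gs (sf p.1 p.2)‖₊ : ℝ≥0∞) := rfl
      rw [h2, ← hsfeq p.1 p.2, h1]
    have hzpow : (2:ℝ≥0∞)^(p.1.2 + 1) = 2 * (2:ℝ≥0∞)^(p.1.2) := by
      rw [ENNReal.zpow_add (by norm_num) (by norm_num) p.1.2 1, zpow_one, mul_comm]
    rw [hzpow, hval, mul_comm (μ _) (φ _), ← mul_assoc]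
    rw [mul_assoc, mul_assoc]
    exact mul_le_mul_right (mul_le_mul_left hφs.le _) 2
  have hΨpint : ∫⁻ x, Ψp x ∂μ ≤ 2 * K := by
    have hrw : ∫⁻ x, Ψp x ∂μ = ∑' (p : Σ q : Fin P.k × ℤ, ιf q),
        ∫⁻ x, (D p.1 p.2).indicator (fun _ => (2:ℝ≥0∞)^(p.1.2 + 1)) x ∂μ := by
      rw [← lintegral_tsum (fun (p : Σ q : Fin P.k × ℤ, ιf q) =>
        (measurable_const.indicator (hDm p.1 p.2)).aemeasurable)]
    rw [hrw]
    calc ∑' (p : Σ q : Fin P.k × ℤ, ιf q),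
          ∫⁻ x, (D p.1 p.2).indicator (fun _ => (2:ℝ≥0∞)^(p.1.2 + 1)) x ∂μ
        = ∑' (p : Σ q : Fin P.k × ℤ, ιf q), (2:ℝ≥0∞)^(p.1.2 + 1) * μ (D p.1 p.2) := by
          refine tsum_congr (fun p => ?_)
          rw [lintegral_indicator (hDm p.1 p.2), setLIntegral_const]
      _ ≤ ∑' (p : Σ q : Fin P.k × ℤ, ιf q),
            2 * (μ (D p.1 p.2) * (‖f (sf p.1 p.2) - f (P.tag p.1.1)‖₊ : ℝ≥0∞)) :=
          ENNReal.tsum_le_tsum hcoeff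
      _ = 2 * ∑' (p : Σ q : Fin P.k × ℤ, ιf q),
            μ (D p.1 p.2) * (‖f (sf p.1 p.2) - f (P.tag p.1.1)‖₊ : ℝ≥0∞) :=
          ENNReal.tsum_mul_left
      _ ≤ 2 * K := mul_le_mul_right hcore 2
  -- pointwise bound
  have hpt : ∀ x : T, f x = f' x → φ x ≤ hAfun x + Ψp x := by
    intro x hfx
    by_cases h0 : φ x = 0
    · rw [h0]; exact zero_le
    have hne : φ x ≠ ∞ := ENNReal.coe_ne_top
    obtain ⟨m, hm⟩ := ENNReal.exists_mem_Ioc_zpow h0 hne one_lt_two (by norm_num)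
    have hxV : x ∈ V m := hm
    by_cases htg : x ∈ Set.range P.tag
    · exfalso
      obtain ⟨i, rfl⟩ := htg
      have h1 : gs (P.tag i) = f (P.tag i) := stepFun_tag P hPH f i
      have h2 : φ (P.tag i) = 0 := by
        rw [hφ]
        simp only
        rw [h1, ← hfx, sub_self]
        simp
      exact h0 h2
    by_cases hxA : x ∈ A
    · have hterm : φ x ≤ hAfun x := by
        have ha : (x ∈ A \ Set.range P.tag) := ⟨hxA, htg⟩
        have hle := ENNReal.le_tsum (f := fun (a : ↥(A \ Set.range P.tag)) =>
          ({(a : T)} : Set T).indicator (fun _ => (‖f (a : T) - gs (a : T)‖₊ : ℝ≥0∞)) x) ⟨x, ha⟩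
        have hind := Set.indicator_of_mem
          (show x ∈ ({((⟨x, ha⟩ : ↥(A \ Set.range P.tag)) : T)} : Set T) from rfl)
          (fun _ => (‖f ((⟨x, ha⟩ : ↥(A \ Set.range P.tag)) : T)
            - gs ((⟨x, ha⟩ : ↥(A \ Set.range P.tag)) : T)‖₊ : ℝ≥0∞))
        rw [hind] at hle
        refine le_trans (le_of_eq ?_) hle
        show (‖f' x - gs x‖₊ : ℝ≥0∞) = (‖f x - gs x‖₊ : ℝ≥0∞)
        rw [hfx]
      exact le_trans hterm (le_add_right le_rfl)
    · have hxW : x ∈ (V m ∩ P.E (pieceIdx x) ∩ Aᶜ ∩ {y | f y = f' y}) \ Set.range P.tag :=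
        ⟨⟨⟨⟨hxV, hpieceIdx x⟩, hxA⟩, hfx⟩, htg⟩
      obtain ⟨l, hl⟩ := Set.mem_iUnion.mp (hcov (pieceIdx x, m) hxW)
      have hterm : (2:ℝ≥0∞)^(m+1) ≤ Ψp x := by
        have hle := ENNReal.le_tsum (f := fun (p : Σ q : Fin P.k × ℤ, ιf q) =>
          (D p.1 p.2).indicator (fun _ => (2:ℝ≥0∞)^(p.1.2 + 1)) x) ⟨(pieceIdx x, m), l⟩
        rw [Set.indicator_of_mem hl] at hle
        exact hle
      calc φ x ≤ (2:ℝ≥0∞)^(m+1) := hm.2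
        _ ≤ Ψp x := hterm
        _ ≤ hAfun x + Ψp x := le_add_left le_rfl
  -- conclude
  have hae : ∀ᵐ x ∂μ, (‖f x‖₊ : ℝ≥0∞) ≤ (‖gs x‖₊ : ℝ≥0∞) + (hAfun x + Ψp x) := by
    filter_upwards [hff'] with x hfx
    have htri : (‖f x‖₊ : ℝ≥0∞) ≤ (‖gs x‖₊ : ℝ≥0∞) + (‖f x - gs x‖₊ : ℝ≥0∞) := by
      have := nnnorm_add_le (gs x) (f x - gs x)
      rw [add_sub_cancel] at this
      exact_mod_cast this
    refine htri.trans (add_le_add_right ?_ _)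
    have hphi : (‖f x - gs x‖₊ : ℝ≥0∞) = φ x := by rw [hφ, hfx]
    rw [hphi]
    exact hpt x hfx
  calc ∫⁻ x, (‖f x‖₊ : ℝ≥0∞) ∂μ
      ≤ ∫⁻ x, ((‖gs x‖₊ : ℝ≥0∞) + (hAfun x + Ψp x)) ∂μ := lintegral_mono_ae hae
    _ = ∫⁻ x, (‖gs x‖₊ : ℝ≥0∞) ∂μ + ∫⁻ x, (hAfun x + Ψp x) ∂μ :=
        lintegral_add_left hgssm.enorm _
    _ = ∫⁻ x, (‖gs x‖₊ : ℝ≥0∞) ∂μ + (∫⁻ x, hAfun x ∂μ + ∫⁻ x, Ψp x ∂μ) := by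
        rw [lintegral_add_left hAfunm]
    _ < ∞ := by
        have h1 := stepFun_lintegral_lt_top μ P f
        have h2 : ∫⁻ x, hAfun x ∂μ + ∫⁻ x, Ψp x ∂μ ≤ K + 2 * K := add_le_add hAfunint hΨpint
        have h3 : K + 2 * K < ∞ := by
          rw [hK]
          refine ENNReal.add_lt_top.mpr ⟨ENNReal.ofReal_lt_top, ?_⟩
          exact ENNReal.mul_lt_top (by norm_num) ENNReal.ofReal_lt_top
        exact ENNReal.add_lt_top.mpr ⟨h1, lt_of_le_of_lt h2 h3⟩
end Fin2

theorem oH_bochner_of_Lspace {T : Type*} [MetricSpace T] [CompactSpace T] [MeasurableSpace T] [BorelSpace T]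
    (μ : Measure T) [IsFiniteMeasure μ] [μ.Regular]
    {X : Type*} [NormedAddCommGroup X] [Lattice X] [HasSolidNorm X] [IsOrderedAddMonoid X] [NormedSpace ℝ X] [CompleteSpace X]
    (hL : ∀ x y : X, 0 ≤ x → 0 ≤ y → ‖x + y‖ = ‖x‖ + ‖y‖) (f : T → X) (J : X)
    (hf : HasOHIntegralOn f μ Set.univ J) :
    Integrable f μ := by
  classical
  obtain ⟨b, hb, γ, hγ, hint⟩ := hf
  have hbnn : ∀ n, 0 ≤ b n := fun n => hb.2.1 ⟨n, rfl⟩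
  have hbt := oseq_norm_tendsto hL hb
  choose P hPH hPF using fun n => exists_fine_henstock (γ n) (hγ n)
  -- select a rapidly decreasing subsequence
  have hsel : ∀ k : ℕ, ∃ n, ‖b n‖ ≤ (1/8) * (1/16) ^ k := by
    intro k
    have hεpos : (0:ℝ) < (1/8) * (1/16)^k := by positivity
    obtain ⟨N, hN⟩ := (Metric.tendsto_atTop.mp hbt) _ hεpos
    refine ⟨N, ?_⟩
    have := hN N le_rfl
    rw [Real.dist_eq, sub_zero, abs_of_nonneg (norm_nonneg _)] at this
    exact this.le
  choose nk hnk using hsel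
  set Zk : ℕ → Set T := fun k => {x | (1/2:ℝ)^k ≤ ‖f x - stepFun (P (nk k)) f x‖} with hZk
  have hZle : ∀ k, μ (Zk k) ≤ ENNReal.ofReal ((1/2:ℝ)^k) := by
    intro k
    have hd := dist_bound μ hL f J (b (nk k)) (hbnn _) (γ (nk k)) (hγ _)
      (fun Q hQH hQF => hint (nk k) Q hQH hQF) (P (nk k)) (hPH _) (hPF _)
      ((1/2:ℝ)^k) (by positivity)
    refine hd.trans ?_
    rw [← ENNReal.ofReal_div_of_pos (by positivity)]
    apply ENNReal.ofReal_le_ofReal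
    rw [div_le_iff₀ (by positivity)]
    have h1 : 8 * ‖b (nk k)‖ ≤ (1/16:ℝ)^k := by
      have := hnk k
      linarith
    have h2 : ((1/16:ℝ))^k = ((1/2:ℝ)^k) * ((1/2:ℝ)^k) * ((1/2:ℝ)^k) * ((1/2:ℝ)^k) := by
      rw [← mul_pow, ← mul_pow, ← mul_pow]
      norm_num
    have h3 : ((1/2:ℝ)^k) ≤ 1 := by
      apply pow_le_one₀ <;> norm_num
    have h4 : (0:ℝ) ≤ (1/2:ℝ)^k := by positivity
    calc 8 * ‖b (nk k)‖ ≤ (1/16:ℝ)^k := h1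
      _ ≤ ((1/2:ℝ)^k) * ((1/2:ℝ)^k) := by
        nlinarith [mul_nonneg (mul_nonneg h4 h4) (sub_nonneg.mpr h3),
          mul_nonneg (mul_nonneg (mul_nonneg h4 h4) h4) (sub_nonneg.mpr h3)]
  have hsum : ∑' k, μ (Zk k) ≠ ∞ := by
    have hsummable : Summable (fun k : ℕ => (1/2:ℝ)^k) :=
      summable_geometric_of_lt_one (by norm_num) (by norm_num)
    have h1 : ∑' k, μ (Zk k) ≤ ∑' k : ℕ, ENNReal.ofReal ((1/2:ℝ)^k) := ENNReal.tsum_le_tsum hZle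
    have h2 : ∑' k : ℕ, ENNReal.ofReal ((1/2:ℝ)^k) = ENNReal.ofReal (∑' k : ℕ, (1/2:ℝ)^k) :=
      (ENNReal.ofReal_tsum_of_nonneg (fun k => by positivity) hsummable).symm
    refine ne_top_of_le_ne_top ?_ h1
    rw [h2]
    exact ENNReal.ofReal_ne_top
  have hev := MeasureTheory.ae_eventually_notMem hsum
  have haet : ∀ᵐ x ∂μ, Tendsto (fun k => stepFun (P (nk k)) f x) atTop (nhds (f x)) := by
    filter_upwards [hev] with x hx
    have hnorm : ∀ᶠ k in atTop, ‖stepFun (P (nk k)) f x - f x‖ ≤ (1/2:ℝ)^k := by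
      filter_upwards [hx] with k hk
      rw [norm_sub_rev]
      rw [hZk] at hk
      simp only [Set.mem_setOf_eq, not_le] at hk
      exact hk.le
    have h0 : Tendsto (fun k : ℕ => (1/2:ℝ)^k) atTop (nhds 0) :=
      tendsto_pow_atTop_nhds_zero_of_lt_one (by norm_num) (by norm_num)
    have hten := squeeze_zero_norm' hnorm h0
    exact tendsto_sub_nhds_zero_iff.mp hten
  have hmeasf : AEStronglyMeasurable f μ :=
    aestronglyMeasurable_of_tendsto_ae atTop
      (fun k => (stepFun_sm (P (nk k)) f).aestronglyMeasurable) haet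
  refine ⟨hmeasf, ?_⟩
  exact finite_integral_part μ hL f J (b 0) (hbnn _) (γ 0) (hγ _)
    (fun Q h1 h2 => hint 0 Q h1 h2) (P 0) (hPH _) (hPF _)
    (hmeasf.mk f) hmeasf.stronglyMeasurable_mk hmeasf.ae_eq_mk
end

section
/- (Sandwich lemma.) Let f: [0,1] → X and suppose there exist an (o)-sequence (b_n) such that for every n there are order-McShane integrable functions g_1, g_2: [0,1] → X, with a common regulating (o)-sequence (β_n), satisfying g_1 ≤ f ≤ g_2 pointwise and (oM)∫ g_2 dλ ≤ (oM)∫ g_1 dλ + b_n. Then f is order-McShane integrable. -/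
open MeasureTheory Set Filter

section SandwichAux

variable {X : Type*} [NormedAddCommGroup X] [Lattice X] [HasSolidNorm X] [IsOrderedAddMonoid X] [NormedSpace ℝ X]

omit [NormedSpace ℝ X] in
lemma pow2_smul_nonneg : ∀ (k : ℕ) (y : X), 0 ≤ (2^k : ℕ) • y → 0 ≤ y := by
  intro k
  induction k with
  | zero => intro y hy; simpa using hy
  | succ k ih =>
    intro y hy
    have : (2^(k+1) : ℕ) • y = (2^k : ℕ) • (2 • y) := by
      rw [pow_succ, mul_comm, mul_smul, smul_comm]
    rw [this] at hy
    exact nsmul_two_semiclosed (ih _ hy)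

lemma real_smul_nonneg {c : ℝ} (hc : 0 ≤ c) {x : X} (hx : 0 ≤ x) : 0 ≤ c • x := by
  have key : ∀ (n k : ℕ), 0 ≤ ((n : ℝ) / 2^k) • x := by
    intro n k
    have h2 : (0:X) ≤ ((2:ℝ)^k)⁻¹ • x := by
      apply pow2_smul_nonneg k
      have he : (2^k : ℕ) • (((2:ℝ)^k)⁻¹ • x) = x := by
        rw [← Nat.cast_smul_eq_nsmul ℝ, smul_smul]
        push_cast
        rw [mul_inv_cancel₀ (by positivity), one_smul]
      rw [he]; exact hx
    have he2 : ((n:ℝ)/2^k) • x = n • (((2:ℝ)^k)⁻¹ • x) := by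
      rw [← Nat.cast_smul_eq_nsmul ℝ, smul_smul, div_eq_mul_inv]
    rw [he2]
    exact nsmul_nonneg h2 n
  have hcl : IsClosed {c : ℝ | 0 ≤ c • x} :=
    isClosed_nonneg.preimage (continuous_id.smul continuous_const)
  have hu : Tendsto (fun k : ℕ => (⌊c * 2^k⌋₊ : ℝ) / 2^k) atTop (nhds c) := by
    have h1 : Tendsto (fun k : ℕ => c - (1/2:ℝ)^k) atTop (nhds c) := by
      have := tendsto_pow_atTop_nhds_zero_of_lt_one (by norm_num : (0:ℝ) ≤ 1/2) (by norm_num)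
      simpa using (tendsto_const_nhds.sub this)
    refine tendsto_of_tendsto_of_tendsto_of_le_of_le h1 tendsto_const_nhds ?_ ?_
    · intro k
      have h2 : c * 2^k < ⌊c * 2^k⌋₊ + 1 := Nat.lt_floor_add_one _
      have hp : (0:ℝ) < 2^k := by positivity
      simp only []
      rw [div_pow, one_pow, sub_le_iff_le_add, ← add_div, le_div_iff₀ hp]
      nlinarith
    · intro k
      have h2 : (⌊c * 2^k⌋₊ : ℝ) ≤ c * 2^k := Nat.floor_le (by positivity)
      have hp : (0:ℝ) < 2^k := by positivity
      simp only []
      rw [div_le_iff₀ hp]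
      linarith
  exact hcl.mem_of_tendsto hu (Eventually.of_forall fun k => key _ k)

lemma real_smul_mono {c : ℝ} (hc : 0 ≤ c) {x y : X} (hxy : x ≤ y) : c • x ≤ c • y := by
  have := real_smul_nonneg hc (sub_nonneg.2 hxy)
  rwa [smul_sub, sub_nonneg] at this

omit [NormedSpace ℝ X] in
lemma oseq_nonneg {b : ℕ → X} (hb : IsOSeq b) (n : ℕ) : 0 ≤ b n :=
  hb.2.1 ⟨n, rfl⟩

omit [NormedSpace ℝ X] in
lemma oseq_peel {b : ℕ → X} (hb : IsOSeq b) {x c : X} (h : ∀ n, x ≤ c + b n) : x ≤ c := by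
  have h1 : x - c ∈ lowerBounds (Set.range b) := by
    rintro _ ⟨n, rfl⟩
    exact sub_le_iff_le_add'.2 (h n)
  exact sub_nonpos.1 (hb.2.2 h1)

omit [NormedSpace ℝ X] in
lemma oseq_add {b β : ℕ → X} (hb : IsOSeq b) (hβ : IsOSeq β) :
    IsOSeq (fun n => b n + β n) := by
  constructor
  · exact fun m n hmn => add_le_add (hb.1 hmn) (hβ.1 hmn)
  · constructor
    · rintro _ ⟨n, rfl⟩
      exact add_nonneg (oseq_nonneg hb n) (oseq_nonneg hβ n)
    · intro y hy
      have h2 : ∀ n k, y ≤ b n + β k := by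
        intro n k
        have := hy ⟨max n k, rfl⟩
        exact this.trans (add_le_add (hb.1 (le_max_left n k)) (hβ.1 (le_max_right n k)))
      have h3 : ∀ k, y ≤ β k := by
        intro k
        refine oseq_peel hb (c := β k) fun n => ?_
        rw [add_comm]
        exact h2 n k
      have := oseq_peel hβ (c := 0) (fun k => by simpa using h3 k)
      simpa using this

/-- The cutoff gage: small enough outside `Icc 0 1` to force tags of nonempty
pieces into `Icc 0 1`. -/
noncomputable def cutGage : ℝ → ℝ := fun t =>
  if t ∈ Set.Icc (0:ℝ) 1 then 1 else Metric.infDist t (Set.Icc 0 1)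

lemma cutGage_pos : IsGage cutGage := by
  intro t
  unfold cutGage
  split_ifs with h
  · norm_num
  · exact (isClosed_Icc.notMem_iff_infDist_pos ⟨0, by norm_num⟩).1 h

lemma exists_fine_part (γ : ℝ → ℝ) (hγ : IsGage γ) :
    ∃ P : TaggedPart ℝ (Set.Icc 0 1), P.IsFine γ := by
  classical
  obtain ⟨s, hs⟩ := (isCompact_Icc (a := (0:ℝ)) (b := 1)).elim_finite_subcover
    (fun t : ℝ => Metric.ball t (γ t)) (fun t => Metric.isOpen_ball)
    (fun x _ => Set.mem_iUnion.2 ⟨x, Metric.mem_ball_self (hγ x)⟩)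
  set k := s.card with hk
  set e : Fin k ≃ {x // x ∈ s} := s.equivFin.symm with he
  set tg : Fin k → ℝ := fun i => (e i : ℝ) with htg
  set B : Fin k → Set ℝ := fun i => Metric.ball (tg i) (γ (tg i)) with hB
  set E : Fin k → Set ℝ := fun i =>
    (Set.Icc 0 1 ∩ B i) \ ⋃ (j : Fin k) (_ : j < i), B j with hE
  have hEsub : ∀ i, E i ⊆ Set.Icc 0 1 := fun i x hx => hx.1.1
  have hEB : ∀ i, E i ⊆ B i := fun i x hx => hx.1.2
  have hmeas : ∀ i, MeasurableSet (E i) := by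
    intro i
    exact (measurableSet_Icc.inter measurableSet_ball).diff
      (MeasurableSet.iUnion fun j => MeasurableSet.iUnion fun _ => measurableSet_ball)
  have hdisj : ∀ i j, i ≠ j → Disjoint (E i) (E j) := by
    have key : ∀ i j : Fin k, i < j → Disjoint (E i) (E j) := by
      intro i j hij
      rw [Set.disjoint_left]
      intro x hxi hxj
      exact hxj.2 (Set.mem_iUnion.2 ⟨i, Set.mem_iUnion.2 ⟨hij, hEB i hxi⟩⟩)
    intro i j hij
    rcases lt_or_gt_of_ne hij with h | h
    · exact key i j h
    · exact (key j i h).symm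
  have hcover : (⋃ i, E i) = Set.Icc 0 1 := by
    apply Set.Subset.antisymm
    · exact Set.iUnion_subset hEsub
    · intro x hx
      have hx2 := hs hx
      rw [Set.mem_iUnion₂] at hx2
      obtain ⟨t, ht, hxt⟩ := hx2
      have hex : ∃ n : ℕ, ∃ hn : n < k, x ∈ B ⟨n, hn⟩ := by
        refine ⟨(e.symm ⟨t, ht⟩ : Fin k), (e.symm ⟨t, ht⟩).isLt, ?_⟩
        simp only [hB, htg, Fin.eta]
        rw [Equiv.apply_symm_apply]
        exact hxt
      obtain ⟨hn₀, hxn₀⟩ := Nat.find_spec hex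
      refine Set.mem_iUnion.2 ⟨⟨Nat.find hex, hn₀⟩, ⟨⟨hx, hxn₀⟩, ?_⟩⟩
      intro hmem
      rw [Set.mem_iUnion] at hmem
      obtain ⟨j, hj⟩ := hmem
      rw [Set.mem_iUnion] at hj
      obtain ⟨hji, hxj⟩ := hj
      exact Nat.find_min hex (m := j.val) hji ⟨j.isLt, by simpa [Fin.eta] using hxj⟩
  refine ⟨⟨k, E, tg, hmeas, hdisj, hcover⟩, ?_⟩
  intro i w hw
  exact Metric.mem_ball.1 (hEB i hw)

lemma tag_mem_of_cutfine {γ : ℝ → ℝ} (hγ : ∀ t, γ t ≤ cutGage t)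
    (P : TaggedPart ℝ (Set.Icc 0 1)) (hP : P.IsFine γ) :
    ∀ i, (P.E i).Nonempty → P.tag i ∈ Set.Icc (0:ℝ) 1 := by
  rintro i ⟨w, hw⟩
  by_contra ht
  have hwI : w ∈ Set.Icc (0:ℝ) 1 := by
    rw [← P.cover]; exact Set.mem_iUnion.2 ⟨i, hw⟩
  have h1 : dist w (P.tag i) < γ (P.tag i) := hP i w hw
  have h2 : γ (P.tag i) ≤ Metric.infDist (P.tag i) (Set.Icc 0 1) := by
    have := hγ (P.tag i)
    rwa [cutGage, if_neg ht] at this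
  have h3 : Metric.infDist (P.tag i) (Set.Icc 0 1) ≤ dist (P.tag i) w :=
    Metric.infDist_le_dist_of_mem hwI
  rw [dist_comm] at h3
  linarith

lemma taggedPart_sum_mono (P : TaggedPart ℝ (Set.Icc 0 1))
    (htag : ∀ i, (P.E i).Nonempty → P.tag i ∈ Set.Icc (0:ℝ) 1)
    {g g' : ℝ → X} (hgg' : ∀ t ∈ Set.Icc (0:ℝ) 1, g t ≤ g' t) :
    P.sum g volume ≤ P.sum g' volume := by
  apply Finset.sum_le_sum
  intro i _
  by_cases hne : (P.E i).Nonempty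
  · exact real_smul_mono ENNReal.toReal_nonneg (hgg' _ (htag i hne))
  · rw [Set.not_nonempty_iff_eq_empty] at hne
    simp [hne]

end SandwichAux

theorem oM_sandwich_lemma
    {X : Type*} [NormedAddCommGroup X] [Lattice X] [HasSolidNorm X] [IsOrderedAddMonoid X] [NormedSpace ℝ X] [CompleteSpace X]
    (hDC : ∀ s : Set X, s.Nonempty → BddAbove s → ∃ x, IsLUB s x) (f : ℝ → X) (b β : ℕ → X) (hb : IsOSeq b) (hβ : IsOSeq β)
    (h : ∀ n : ℕ, ∃ g₁ g₂ : ℝ → X, ∃ J₁ J₂ : X,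
      HasOMIntegralOnWith g₁ volume (Set.Icc 0 1) J₁ β ∧
      HasOMIntegralOnWith g₂ volume (Set.Icc 0 1) J₂ β ∧
      (∀ t ∈ Set.Icc (0:ℝ) 1, g₁ t ≤ f t ∧ f t ≤ g₂ t) ∧
      J₂ ≤ J₁ + b n) :
    ∃ J : X, HasOMIntegralOn f volume (Set.Icc 0 1) J := by
  classical
  choose g₁ g₂ J₁ J₂ hg₁ hg₂ hle hJ using h
  choose γ₁ hγ₁pos hγ₁ using hg₁
  choose γ₂ hγ₂pos hγ₂ using hg₂
  set δ : ℕ → ℕ → ℝ → ℝ :=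
    fun n m t => min (min (γ₁ n m t) (γ₂ n m t)) (cutGage t) with hδdef
  have hδpos : ∀ n m, IsGage (δ n m) := fun n m t =>
    lt_min (lt_min (hγ₁pos n m t) (hγ₂pos n m t)) (cutGage_pos t)
  have key : ∀ n m (P : TaggedPart ℝ (Set.Icc 0 1)), P.IsFine (δ n m) →
      J₁ n - β m ≤ P.sum f volume ∧ P.sum f volume ≤ (J₁ n + b n) + β m := by
    intro n m P hP
    have htag : ∀ i, (P.E i).Nonempty → P.tag i ∈ Set.Icc (0:ℝ) 1 :=
      tag_mem_of_cutfine (fun t => min_le_right _ _) P hP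
    have hf1 : P.IsFine (γ₁ n m) := fun i w hw =>
      lt_of_lt_of_le (hP i w hw) ((min_le_left _ _).trans (min_le_left _ _))
    have hf2 : P.IsFine (γ₂ n m) := fun i w hw =>
      lt_of_lt_of_le (hP i w hw) ((min_le_left _ _).trans (min_le_right _ _))
    have h1 := hγ₁ n m P hf1
    have h2 := hγ₂ n m P hf2
    have hs1 : P.sum (g₁ n) volume ≤ P.sum f volume :=
      taggedPart_sum_mono P htag (fun t ht => (hle n t ht).1)
    have hs2 : P.sum f volume ≤ P.sum (g₂ n) volume :=
      taggedPart_sum_mono P htag (fun t ht => (hle n t ht).2)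
    constructor
    · have hlow : J₁ n - P.sum (g₁ n) volume ≤ β m := by
        have : -(P.sum (g₁ n) volume - J₁ n) ≤ |P.sum (g₁ n) volume - J₁ n| :=
          neg_le_abs _
        rw [neg_sub] at this
        exact this.trans h1
      have : J₁ n - β m ≤ P.sum (g₁ n) volume := sub_le_comm.1 hlow
      exact this.trans hs1
    · have hupp : P.sum (g₂ n) volume ≤ J₂ n + β m :=
        sub_le_iff_le_add'.1 ((le_abs_self _).trans h2)
      refine (hs2.trans hupp).trans ?_
      exact add_le_add_left (hJ n) (β m)
  have hC : ∀ n k, J₁ n - b n ≤ J₁ k + b k := by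
    intro n k
    refine oseq_peel (oseq_add hβ hβ) (c := J₁ k + b k) fun m => ?_
    obtain ⟨P, hP⟩ := exists_fine_part (fun t => min (δ n m t) (δ k m t))
      (fun t => lt_min (hδpos n m t) (hδpos k m t))
    have hPn : P.IsFine (δ n m) := fun i w hw =>
      lt_of_lt_of_le (hP i w hw) (min_le_left _ _)
    have hPk : P.IsFine (δ k m) := fun i w hw =>
      lt_of_lt_of_le (hP i w hw) (min_le_right _ _)
    have A := (key n m P hPn).1
    have B := (key k m P hPk).2
    have h4 : J₁ n ≤ ((J₁ k + b k) + β m) + β m := sub_le_iff_le_add.1 (A.trans B)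
    have h5 : J₁ n - b n ≤ J₁ n := sub_le_self _ (oseq_nonneg hb n)
    calc J₁ n - b n ≤ ((J₁ k + b k) + β m) + β m := h5.trans h4
      _ = (J₁ k + b k) + (β m + β m) := by rw [add_assoc]
  obtain ⟨J, hJlub⟩ := hDC (Set.range fun n => J₁ n - b n) ⟨_, ⟨0, rfl⟩⟩
    ⟨J₁ 0 + b 0, by rintro _ ⟨n, rfl⟩; exact hC n 0⟩
  have hJup : ∀ k, J ≤ J₁ k + b k := fun k =>
    hJlub.2 (by rintro _ ⟨n, rfl⟩; exact hC n k)
  have hJlo : ∀ k, J₁ k - b k ≤ J := fun k => hJlub.1 ⟨k, rfl⟩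
  refine ⟨J, fun n => b n + (b n + β n), oseq_add hb (oseq_add hb hβ),
    fun n => δ n n, fun n => hδpos n n, ?_⟩
  intro n P hP
  obtain ⟨A, B⟩ := key n n P hP
  simp only []
  refine abs_le'.2 ⟨?_, ?_⟩
  · have h8 : J₁ n ≤ J + b n := sub_le_iff_le_add.1 (hJlo n)
    have h9 : P.sum f volume ≤ J + (b n + (b n + β n)) := by
      calc P.sum f volume ≤ (J₁ n + b n) + β n := B
        _ ≤ ((J + b n) + b n) + β n := by
            refine add_le_add_left (add_le_add_left h8 _) _
        _ = J + (b n + (b n + β n)) := by abel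
    exact (sub_le_iff_le_add' (a := P.sum f volume) (b := J)
      (c := b n + (b n + β n))).2 h9
  · have h6 : J - b n ≤ J₁ n := sub_le_iff_le_add.2 (hJup n)
    have h7 : J - (b n + (b n + β n)) ≤ P.sum f volume := by
      calc J - (b n + (b n + β n)) = (J - b n) - (b n + β n) := by abel
        _ ≤ J₁ n - (b n + β n) := sub_le_sub_right h6 _
        _ ≤ J₁ n - β n := by
            refine sub_le_sub_left ?_ _
            exact le_add_of_nonneg_left (oseq_nonneg hb n)
        _ ≤ P.sum f volume := A
    rw [neg_sub]
    exact sub_le_comm.1 h7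
end

section
/- Every X-valued step function g = Σ_{i=1}^{k} x_i 1_{E_i} on T (with x_i ∈ X and E_i disjoint Borel sets) is order-Henstock integrable, with integral Σ_i x_i μ(E_i). -/
open MeasureTheory Set Filter

/-! ### Auxiliary order lemmas for real scalar multiplication on a normed lattice group -/

section SmulOrder
variable {X : Type*} [NormedAddCommGroup X] [Lattice X] [HasSolidNorm X] [IsOrderedAddMonoid X] [NormedSpace ℝ X]

omit [NormedSpace ℝ X] in
lemma ohstep_pow2_semiclosed : ∀ (n : ℕ) (a : X), 0 ≤ (2 ^ n) • a → 0 ≤ a := by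
  intro n
  induction n with
  | zero => intro a h; simpa using h
  | succ m ih =>
    intro a h
    refine nsmul_two_semiclosed (ih (2 • a) ?_)
    rw [smul_smul, ← pow_succ]
    exact h

lemma ohstep_smul_nonneg {r : ℝ} (hr : 0 ≤ r) {x : X} (hx : 0 ≤ x) : 0 ≤ r • x := by
  set f : ℕ → ℝ := fun n => (⌈r * 2 ^ n⌉₊ : ℝ) / 2 ^ n with hf
  have hpos : ∀ n, 0 ≤ f n • x := by
    intro n
    apply ohstep_pow2_semiclosed n
    have key : (2 ^ n) • (f n • x) = ⌈r * 2 ^ n⌉₊ • x := by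
      rw [← Nat.cast_smul_eq_nsmul ℝ (2 ^ n), ← Nat.cast_smul_eq_nsmul ℝ ⌈r * 2 ^ n⌉₊,
        smul_smul]
      congr 1
      have h2 : ((2:ℝ) ^ n) ≠ 0 := by positivity
      field_simp [hf]
      simp only [hf]
      push_cast
      field_simp
    rw [key]
    exact nsmul_nonneg hx _
  have hub : ∀ n, ‖f n - r‖ ≤ ((1:ℝ)/2) ^ n := by
    intro n
    have h2 : (0:ℝ) < 2 ^ n := by positivity
    have hge : r ≤ f n := by
      rw [hf]; simp only []
      rw [le_div_iff₀ h2]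
      exact Nat.le_ceil _
    have hle : f n ≤ r + (1/2) ^ n := by
      rw [hf]; simp only []
      rw [div_le_iff₀ h2]
      have h3 := (Nat.ceil_lt_add_one (show (0:ℝ) ≤ r * 2 ^ n by positivity)).le
      have h4 : ((1:ℝ)/2) ^ n * 2 ^ n = 1 := by
        rw [div_pow, one_pow, div_mul_cancel₀]
        exact h2.ne'
      nlinarith
    rw [Real.norm_eq_abs, abs_of_nonneg (by linarith)]
    linarith
  have h3 : Tendsto (fun n : ℕ => ((1:ℝ)/2) ^ n) atTop (nhds 0) :=
    tendsto_pow_atTop_nhds_zero_of_lt_one (by norm_num) (by norm_num)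
  have h1 : Tendsto f atTop (nhds r) := by
    have := squeeze_zero_norm hub h3
    rw [← tendsto_sub_nhds_zero_iff]
    exact this
  have htend : Tendsto (fun n => f n • x) atTop (nhds (r • x)) :=
    h1.smul tendsto_const_nhds
  exact ge_of_tendsto htend (Eventually.of_forall hpos)

lemma ohstep_smul_mono {r : ℝ} (hr : 0 ≤ r) {x y : X} (h : x ≤ y) : r • x ≤ r • y := by
  have := ohstep_smul_nonneg hr (sub_nonneg.2 h)
  rwa [smul_sub, sub_nonneg] at this

lemma ohstep_smul_mono_left {r s : ℝ} (hrs : r ≤ s) {x : X} (hx : 0 ≤ x) :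
    r • x ≤ s • x := by
  have := ohstep_smul_nonneg (sub_nonneg.2 hrs) hx
  rwa [sub_smul, sub_nonneg] at this

lemma ohstep_smul_le_abs (c : ℝ) (x : X) : c • x ≤ |c| • |x| := by
  rcases le_or_gt 0 c with hc | hc
  · calc c • x ≤ c • |x| := ohstep_smul_mono hc (le_abs_self x)
    _ = |c| • |x| := by rw [abs_of_nonneg hc]
  · calc c • x = (-c) • (-x) := by rw [neg_smul_neg]
    _ ≤ (-c) • |x| := ohstep_smul_mono (by linarith) (neg_le_abs x)
    _ = |c| • |x| := by rw [abs_of_neg hc]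

lemma ohstep_abs_smul_le (c : ℝ) (x : X) : |c • x| ≤ |c| • |x| := by
  rw [abs_le']
  refine ⟨ohstep_smul_le_abs c x, ?_⟩
  have := ohstep_smul_le_abs c (-x)
  rwa [smul_neg, abs_neg, ← neg_smul, neg_smul] at this

omit [NormedSpace ℝ X] in
lemma ohstep_abs_sum_le {ι : Type*} (s : Finset ι) (f : ι → X) :
    |∑ i ∈ s, f i| ≤ ∑ i ∈ s, |f i| := by
  classical
  induction s using Finset.induction_on with
  | empty => simp
  | insert _ _ hnot ih =>
    rename_i a s'
    rw [Finset.sum_insert hnot, Finset.sum_insert hnot]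
    exact (abs_add_le _ _).trans (add_le_add_right ih _)

end SmulOrder

/-! ### The scalar estimate for indicator functions -/

lemma ohstep_scalar_gage {T : Type*} [MetricSpace T] [MeasurableSpace T] [BorelSpace T]
    (μ : Measure T) [IsFiniteMeasure μ] [μ.Regular] {E : Set T} (hE : MeasurableSet E)
    {ε : ℝ} (hε : 0 < ε) :
    ∃ γ : T → ℝ, IsGage γ ∧ ∀ P : TaggedPart T Set.univ, P.IsHenstock → P.IsFine γ →
      |(∑ p, (μ (P.E p)).toReal * (E.indicator 1 (P.tag p))) - (μ E).toReal| ≤ ε := by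
  have hε' : (ENNReal.ofReal ε) ≠ 0 := by
    simp [ENNReal.ofReal_eq_zero, not_le, hε]
  obtain ⟨U, hEU, hUo, hUm⟩ := E.exists_isOpen_lt_add (measure_ne_top μ E) hε'
  obtain ⟨V, hEV, hVo, hVm⟩ := Eᶜ.exists_isOpen_lt_add (measure_ne_top μ Eᶜ) hε'
  have hball : ∀ t : T, ∃ r : ℝ, 0 < r ∧ (t ∈ E → Metric.ball t r ⊆ U) ∧
      (t ∉ E → Metric.ball t r ⊆ V) := by
    intro t
    by_cases ht : t ∈ E
    · obtain ⟨r, hr, hsub⟩ := Metric.isOpen_iff.1 hUo t (hEU ht)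
      exact ⟨r, hr, fun _ => hsub, fun h => absurd ht h⟩
    · obtain ⟨r, hr, hsub⟩ := Metric.isOpen_iff.1 hVo t (hEV ht)
      exact ⟨r, hr, fun h => absurd h ht, fun _ => hsub⟩
  choose γ hγpos hγU hγV using hball
  refine ⟨γ, hγpos, fun P hH hF => ?_⟩
  classical
  set S : Finset (Fin P.k) := Finset.univ.filter (fun p => P.tag p ∈ E) with hS
  have hsubU : ∀ p ∈ S, P.E p ⊆ U := by
    intro p hp w hw
    have htag : P.tag p ∈ E := by simpa [hS] using hp
    exact hγU (P.tag p) htag (Metric.mem_ball.2 (hF p w hw))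
  have hsubV : ∀ p ∈ Finset.univ.filter (fun p => P.tag p ∉ E), P.E p ⊆ V := by
    intro p hp w hw
    have htag : P.tag p ∉ E := by simpa using hp
    exact hγV (P.tag p) htag (Metric.mem_ball.2 (hF p w hw))
  have hdisjS : ∀ (s : Finset (Fin P.k)), Set.PairwiseDisjoint (↑s) P.E :=
    fun s i _ j _ hij => P.disj i j hij
  have hAU : ∑ p ∈ S, μ (P.E p) ≤ μ U := by
    rw [← measure_biUnion_finset (hdisjS S) (fun p _ => P.meas p)]
    exact measure_mono (Set.iUnion₂_subset hsubU)
  have hBV : ∑ p ∈ Finset.univ.filter (fun p => P.tag p ∉ E), μ (P.E p) ≤ μ V := by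
    rw [← measure_biUnion_finset (hdisjS _) (fun p _ => P.meas p)]
    exact measure_mono (Set.iUnion₂_subset hsubV)
  have htot : ∑ p ∈ S, μ (P.E p) + ∑ p ∈ Finset.univ.filter (fun p => P.tag p ∉ E), μ (P.E p)
      = μ Set.univ := by
    rw [hS, Finset.sum_filter_add_sum_filter_not]
    rw [← measure_biUnion_finset (hdisjS _) (fun p _ => P.meas p)]
    congr 1
    simpa using P.cover
  set a : ℝ := (∑ p ∈ S, μ (P.E p)).toReal with ha
  set b : ℝ := (∑ p ∈ Finset.univ.filter (fun p => P.tag p ∉ E), μ (P.E p)).toReal with hb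
  have hfin1 : (∑ p ∈ S, μ (P.E p)) ≠ ⊤ := (lt_of_le_of_lt hAU (measure_lt_top μ U)).ne
  have hfin2 : (∑ p ∈ Finset.univ.filter (fun p => P.tag p ∉ E), μ (P.E p)) ≠ ⊤ :=
    (lt_of_le_of_lt hBV (measure_lt_top μ V)).ne
  have hA : a ≤ (μ U).toReal := ENNReal.toReal_mono (measure_ne_top μ U) hAU
  have hB : b ≤ (μ V).toReal := ENNReal.toReal_mono (measure_ne_top μ V) hBV
  have hU2 : (μ U).toReal < (μ E).toReal + ε := by
    have h1 : (μ E + ENNReal.ofReal ε).toReal = (μ E).toReal + ε := by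
      rw [ENNReal.toReal_add (measure_ne_top μ E) ENNReal.ofReal_ne_top,
        ENNReal.toReal_ofReal hε.le]
    rw [← h1]
    exact (ENNReal.toReal_lt_toReal (measure_ne_top μ U)
      (by simp [measure_ne_top μ E])).2 hUm
  have hV2 : (μ V).toReal < (μ Eᶜ).toReal + ε := by
    have h1 : (μ Eᶜ + ENNReal.ofReal ε).toReal = (μ Eᶜ).toReal + ε := by
      rw [ENNReal.toReal_add (measure_ne_top μ Eᶜ) ENNReal.ofReal_ne_top,
        ENNReal.toReal_ofReal hε.le]
    rw [← h1]
    exact (ENNReal.toReal_lt_toReal (measure_ne_top μ V)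
      (by simp [measure_ne_top μ Eᶜ])).2 hVm
  have hcompl : (μ E).toReal + (μ Eᶜ).toReal = (μ Set.univ).toReal := by
    rw [← ENNReal.toReal_add (measure_ne_top μ E) (measure_ne_top μ Eᶜ),
      measure_add_measure_compl hE]
  have htot_r : a + b = (μ Set.univ).toReal := by
    rw [ha, hb, ← ENNReal.toReal_add hfin1 hfin2, htot]
  have hsum_eq : (∑ p, (μ (P.E p)).toReal * (E.indicator 1 (P.tag p))) = a := by
    rw [ha, ENNReal.toReal_sum (fun p _ => measure_ne_top μ _), hS]
    refine Eq.trans ?_ (Finset.sum_filter (fun p => P.tag p ∈ E)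
      (fun p => (μ (P.E p)).toReal)).symm
    refine Finset.sum_congr rfl (fun p _ => ?_)
    by_cases h : P.tag p ∈ E <;> simp [Set.indicator_apply, h]
  rw [hsum_eq, abs_le]
  constructor <;> linarith

/-- Minimum of finitely many gages. -/
lemma ohstep_exists_gage_le {T : Type*} {k : ℕ} (γs : Fin k → T → ℝ)
    (h : ∀ i, IsGage (γs i)) :
    ∃ γ : T → ℝ, IsGage γ ∧ ∀ i t, γ t ≤ γs i t := by
  rcases Nat.eq_zero_or_pos k with hk | hk
  · subst hk
    exact ⟨fun _ => 1, fun _ => one_pos, fun i => i.elim0⟩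
  · have : Nonempty (Fin k) := ⟨⟨0, hk⟩⟩
    refine ⟨fun t => Finset.univ.inf' Finset.univ_nonempty (fun i => γs i t), ?_, ?_⟩
    · intro t
      rw [Finset.lt_inf'_iff]
      exact fun i _ => h i t
    · intro i t
      exact Finset.inf'_le _ (Finset.mem_univ i)

theorem oH_integrable_step_function {T : Type*} [MetricSpace T] [CompactSpace T] [MeasurableSpace T] [BorelSpace T]
    (μ : Measure T) [IsFiniteMeasure μ] [μ.Regular]
    {X : Type*} [NormedAddCommGroup X] [Lattice X] [HasSolidNorm X] [IsOrderedAddMonoid X] [NormedSpace ℝ X] [CompleteSpace X] [NullSingletonClass μ]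
    (hDC : ∀ s : Set X, s.Nonempty → BddAbove s → ∃ x, IsLUB s x) (k : ℕ) (x : Fin k → X) (E : Fin k → Set T)
    (hE : ∀ i, MeasurableSet (E i)) (hdisj : ∀ i j, i ≠ j → Disjoint (E i) (E j)) :
    HasOHIntegralOn (fun t => ∑ i, (E i).indicator (fun _ => x i) t) μ Set.univ
      (∑ i, (μ (E i)).toReal • x i) := by
  classical
  set u : X := ∑ i, |x i| with hu
  have hu0 : 0 ≤ u := Finset.sum_nonneg (fun i _ => abs_nonneg (x i))
  set b : ℕ → X := fun n => (1 / (n + 1 : ℝ)) • u with hb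
  have hεpos : ∀ n : ℕ, (0:ℝ) < 1 / (n + 1 : ℝ) := fun n => by positivity
  refine ⟨b, ⟨?_, ?_⟩, ?_⟩
  · -- Antitone
    intro n m hnm
    refine ohstep_smul_mono_left ?_ hu0
    apply one_div_le_one_div_of_le (by positivity)
    exact_mod_cast add_le_add_left (Nat.cast_le.2 hnm) 1
  · -- IsGLB (range b) 0
    constructor
    · rintro y ⟨n, rfl⟩
      exact ohstep_smul_nonneg (hεpos n).le hu0
    · intro c hc
      have htend : Tendsto b atTop (nhds (0 : X)) := by
        have h1 : Tendsto (fun n : ℕ => 1 / (n + 1 : ℝ)) atTop (nhds 0) :=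
          tendsto_one_div_add_atTop_nhds_zero_nat
        have := h1.smul (tendsto_const_nhds (x := u))
        simpa [hb] using this
      exact ge_of_tendsto htend (Eventually.of_forall (fun n => hc ⟨n, rfl⟩))
  · -- gages and estimate
    have hkey : ∀ n : ℕ, ∃ γ : T → ℝ, IsGage γ ∧
        ∀ P : TaggedPart T Set.univ, P.IsHenstock → P.IsFine γ → ∀ i : Fin k,
          |(∑ p, (μ (P.E p)).toReal * ((E i).indicator 1 (P.tag p))) - (μ (E i)).toReal|
            ≤ 1 / (n + 1 : ℝ) := by
      intro n
      have h1 : ∀ i : Fin k, ∃ γi : T → ℝ, IsGage γi ∧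
          ∀ P : TaggedPart T Set.univ, P.IsHenstock → P.IsFine γi →
            |(∑ p, (μ (P.E p)).toReal * ((E i).indicator 1 (P.tag p))) - (μ (E i)).toReal|
              ≤ 1 / (n + 1 : ℝ) :=
        fun i => ohstep_scalar_gage μ (hE i) (hεpos n)
      choose γi hγi hbound using h1
      obtain ⟨γ, hγ, hle⟩ := ohstep_exists_gage_le γi hγi
      refine ⟨γ, hγ, fun P hH hF i => hbound i P hH ?_⟩
      intro p w hw
      exact lt_of_lt_of_le (hF p w hw) (hle i (P.tag p))
    choose γ hγ hbnd using hkey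
    refine ⟨γ, hγ, fun n P hH hF => ?_⟩
    -- rewrite the Riemann sum
    have hterm : ∀ (t : T) (i : Fin k),
        (E i).indicator (fun _ => x i) t = ((E i).indicator 1 t : ℝ) • x i := by
      intro t i
      by_cases h : t ∈ E i <;> simp [Set.indicator_apply, h]
    have hsum : P.sum (fun t => ∑ i, (E i).indicator (fun _ => x i) t) μ
        = ∑ i, (∑ p, (μ (P.E p)).toReal * ((E i).indicator 1 (P.tag p))) • x i := by
      rw [TaggedPart.sum]
      have : ∀ p : Fin P.k, (μ (P.E p)).toReal • (∑ i, (E i).indicator (fun _ => x i) (P.tag p))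
          = ∑ i, ((μ (P.E p)).toReal * ((E i).indicator 1 (P.tag p))) • x i := by
        intro p
        rw [Finset.smul_sum]
        refine Finset.sum_congr rfl (fun i _ => ?_)
        rw [hterm, smul_smul]
      rw [Finset.sum_congr rfl (fun p _ => this p), Finset.sum_comm]
      refine Finset.sum_congr rfl (fun i _ => ?_)
      rw [Finset.sum_smul]
    have hdiff : P.sum (fun t => ∑ i, (E i).indicator (fun _ => x i) t) μ
        - (∑ i, (μ (E i)).toReal • x i)
        = ∑ i, ((∑ p, (μ (P.E p)).toReal * ((E i).indicator 1 (P.tag p)))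
            - (μ (E i)).toReal) • x i := by
      rw [hsum, ← Finset.sum_sub_distrib]
      refine Finset.sum_congr rfl (fun i _ => ?_)
      rw [sub_smul]
    rw [hdiff]
    calc |∑ i, ((∑ p, (μ (P.E p)).toReal * ((E i).indicator 1 (P.tag p)))
            - (μ (E i)).toReal) • x i|
        ≤ ∑ i, |((∑ p, (μ (P.E p)).toReal * ((E i).indicator 1 (P.tag p)))
            - (μ (E i)).toReal) • x i| := ohstep_abs_sum_le _ _
      _ ≤ ∑ i, (1 / (n + 1 : ℝ)) • |x i| := by
          refine Finset.sum_le_sum (fun i _ => ?_)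
          refine (ohstep_abs_smul_le _ _).trans ?_
          exact ohstep_smul_mono_left (hbnd n P hH hF i) (abs_nonneg (x i))
      _ = b n := by rw [hb, ← Finset.smul_sum, hu]
end

section
/- In the definition of the order-Henstock integral, allowing all free (McShane) γ_n-fine partitions instead of only Henstock partitions yields the same class of integrable functions and the same integral value, for functions on a compact metric space T with a regular nonatomic σ-additive Borel measure μ. -/
open MeasureTheory Set Filter

section Aux

variable {T : Type*} [MetricSpace T] [MeasurableSpace T] [BorelSpace T]
  (μ : Measure T) [IsFiniteMeasure μ] [NullSingletonClass μ]
  {X : Type*} [NormedAddCommGroup X] [Lattice X] [HasSolidNorm X] [IsOrderedAddMonoid X]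
  [NormedSpace ℝ X]

/-- Every free `γ`-fine partition admits a Henstock `γ`-fine partition
with the same Riemann sum (merge equal-tag cells, remove the finite set of
tags from all cells, and insert each tag into its own cell). -/
lemma exists_henstock_of_free (f : T → X) (γ : T → ℝ) (hγ : IsGage γ)
    (P : TaggedPart T (Set.univ : Set T)) (hP : P.IsFine γ) :
    ∃ Q : TaggedPart T (Set.univ : Set T), Q.IsHenstock ∧ Q.IsFine γ ∧
      Q.sum f μ = P.sum f μ := by
  classical
  set R : Set T := Set.range P.tag with hRdef
  have hRfin : R.Finite := Set.finite_range P.tag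
  have hRmeas : MeasurableSet R := hRfin.measurableSet
  have hRzero : μ R = 0 := hRfin.countable.measure_zero μ
  set F : Fin P.k → Finset (Fin P.k) := fun j =>
    Finset.univ.filter (fun i => P.tag i = P.tag j) with hFdef
  have hmemF : ∀ {j' j : Fin P.k}, j' ∈ F j ↔ P.tag j' = P.tag j := by
    intro j' j; simp [hFdef]
  have hFself : ∀ j, j ∈ F j := fun j => hmemF.2 rfl
  set m : Fin P.k → Fin P.k := fun j => (F j).min' ⟨j, hFself j⟩ with hmdef
  have htagm : ∀ j, P.tag (m j) = P.tag j := fun j =>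
    hmemF.1 ((F j).min'_mem ⟨j, hFself j⟩)
  have hFcongr : ∀ {j j' : Fin P.k}, P.tag j = P.tag j' → F j = F j' := by
    intro j j' h; simp [hFdef, h]
  have hmcongr : ∀ {j j' : Fin P.k}, P.tag j = P.tag j' → m j = m j' := by
    intro j j' h
    have hF := hFcongr h
    simp only [hmdef]
    congr 1
  have hmm : ∀ j, m (m j) = m j := fun j => hmcongr (htagm j)
  set S : Finset (Fin P.k) := Finset.univ.filter (fun i => m i = i) with hSdef
  have hmemS : ∀ {i : Fin P.k}, i ∈ S ↔ m i = i := by intro i; simp [hSdef]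
  have hmS : ∀ j, m j ∈ S := fun j => hmemS.2 (hmm j)
  set cell : Fin P.k → Set T := fun i =>
    ((⋃ j ∈ F i, P.E j) \ R) ∪ {P.tag i} with hcelldef
  set e : Fin S.card → {x // x ∈ S} := fun r => S.equivFin.symm r with hedef
  -- disjointness of cells of distinct indices in S
  have hcelldisj : ∀ i ∈ S, ∀ i' ∈ S, i ≠ i' → Disjoint (cell i) (cell i') := by
    intro i hi i' hi' hne
    have htagne : P.tag i ≠ P.tag i' := by
      intro h
      exact hne (by rw [← hmemS.1 hi, hmcongr h, hmemS.1 hi'])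
    rw [Set.disjoint_left]
    rintro x (⟨hxU, hxR⟩ | hx) hx'
    · rcases hx' with ⟨hxU', hxR'⟩ | hx'
      · obtain ⟨j, hjF, hxj⟩ := Set.mem_iUnion₂.1 hxU
        obtain ⟨j', hjF', hxj'⟩ := Set.mem_iUnion₂.1 hxU'
        have hjj' : j ≠ j' := by
          intro h; subst h
          exact htagne ((hmemF.1 hjF).symm.trans (hmemF.1 hjF'))
        exact (P.disj j j' hjj').le_bot ⟨hxj, hxj'⟩
      · rcases hx' with rfl
        exact hxR ⟨i', rfl⟩
    · rcases hx with rfl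
      rcases hx' with ⟨hxU', hxR'⟩ | hx'
      · exact hxR' ⟨i, rfl⟩
      · exact htagne hx'
  refine ⟨⟨S.card, fun r => cell (e r), fun r => P.tag (e r), ?_, ?_, ?_⟩, ?_, ?_, ?_⟩
  · -- measurability
    intro r
    exact ((MeasurableSet.biUnion (F _).countable_toSet
      (fun j _ => P.meas j)).diff hRmeas).union (measurableSet_singleton _)
  · -- disjointness
    intro r r' hrr'
    have hij : ((e r : Fin P.k)) ≠ (e r' : Fin P.k) := by
      intro h
      exact hrr' (S.equivFin.symm.injective (Subtype.ext h))
    exact hcelldisj _ (e r).2 _ (e r').2 hij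
  · -- cover
    apply Set.eq_univ_of_forall
    intro x
    rw [Set.mem_iUnion]
    by_cases hx : x ∈ R
    · obtain ⟨j, rfl⟩ := hx
      refine ⟨S.equivFin ⟨m j, hmS j⟩, ?_⟩
      have : e (S.equivFin ⟨m j, hmS j⟩) = ⟨m j, hmS j⟩ := by
        simp [hedef]
      rw [this]
      exact Or.inr (htagm j).symm
    · have : x ∈ ⋃ j, P.E j := by rw [P.cover]; trivial
      obtain ⟨j, hj⟩ := Set.mem_iUnion.1 this
      refine ⟨S.equivFin ⟨m j, hmS j⟩, ?_⟩
      have he : e (S.equivFin ⟨m j, hmS j⟩) = ⟨m j, hmS j⟩ := by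
        simp [hedef]
      rw [he]
      refine Or.inl ⟨Set.mem_iUnion₂.2 ⟨j, hmemF.2 (htagm j).symm, hj⟩, hx⟩
  · -- Henstock
    intro r
    exact Or.inr rfl
  · -- fineness
    intro r w hw
    rcases hw with ⟨hwU, _⟩ | hw
    · obtain ⟨j, hjF, hwj⟩ := Set.mem_iUnion₂.1 hwU
      have := hP j w hwj
      rwa [hmemF.1 hjF] at this
    · rcases hw with rfl
      simpa [dist_self] using hγ (P.tag (e r))
  · -- sums agree
    have hcellval : ∀ i, μ (cell i) = ∑ j ∈ F i, μ (P.E j) := by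
      intro i
      have h1 : μ (cell i) = μ ((⋃ j ∈ F i, P.E j) \ R) := by
        refine le_antisymm ((measure_union_le _ _).trans ?_)
          (measure_mono Set.subset_union_left)
        simp [measure_singleton]
      have h2 : μ ((⋃ j ∈ F i, P.E j) \ R) = μ (⋃ j ∈ F i, P.E j) :=
        measure_diff_null hRzero
      rw [h1, h2]
      exact measure_biUnion_finset
        (fun a _ b _ hab => P.disj a b hab) (fun b _ => P.meas b)
    set g : Fin P.k → X := fun j => (μ (P.E j)).toReal • f (P.tag j) with hgdef
    have hstep : ∀ i, (μ (cell i)).toReal • f (P.tag i) = ∑ j ∈ F i, g j := by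
      intro i
      rw [hcellval i, ENNReal.toReal_sum (fun j _ => measure_ne_top μ _),
        Finset.sum_smul]
      refine Finset.sum_congr rfl fun j hj => ?_
      rw [hgdef]
      simp only
      rw [hmemF.1 hj]
    have key : ∀ h : Fin P.k → X, (∑ r, h (e r)) = ∑ i ∈ S, h i := by
      intro h
      rw [← Finset.sum_coe_sort S h]
      exact Equiv.sum_comp S.equivFin.symm (fun i : {x // x ∈ S} => h i)
    show (∑ r, (μ (cell (e r))).toReal • f (P.tag (e r))) = ∑ j, g j
    calc (∑ r, (μ (cell (e r))).toReal • f (P.tag (e r)))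
        = ∑ r, ∑ j ∈ F (e r), g j := by
          exact Finset.sum_congr rfl fun r _ => hstep (e r)
      _ = ∑ i ∈ S, ∑ j ∈ F i, g j := key (fun i => ∑ j ∈ F i, g j)
      _ = ∑ i ∈ S, ∑ j ∈ Finset.univ.filter (fun j => m j = i), g j := by
          refine Finset.sum_congr rfl fun i hi => ?_
          have hFi : F i = Finset.univ.filter (fun j => m j = i) := by
            ext j
            simp only [hmemF, Finset.mem_filter, Finset.mem_univ, true_and]
            constructor
            · intro h; rw [hmcongr h, hmemS.1 hi]
            · intro h; rw [← htagm j, h, ← hmemS.1 hi, htagm]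
          rw [hFi]
      _ = ∑ i : Fin P.k, ∑ j ∈ Finset.univ.filter (fun j => m j = i), g j := by
          apply Finset.sum_subset S.subset_univ
          intro i _ hiS
          apply Finset.sum_eq_zero
          intro j hj
          have hmj : m j = i := (Finset.mem_filter.1 hj).2
          exact absurd (hmj ▸ hmS j) hiS
      _ = ∑ j, g j := Finset.sum_fiberwise _ _ _

end Aux

theorem oH_free_iff_henstock {T : Type*} [MetricSpace T] [CompactSpace T] [MeasurableSpace T] [BorelSpace T]
    (μ : Measure T) [IsFiniteMeasure μ] [μ.Regular]
    {X : Type*} [NormedAddCommGroup X] [Lattice X] [HasSolidNorm X] [IsOrderedAddMonoid X]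
    [NormedSpace ℝ X] [CompleteSpace X] [NullSingletonClass μ]
    (hDC : ∀ s : Set X, s.Nonempty → BddAbove s → ∃ x, IsLUB s x) (f : T → X) (J : X) :
    HasOMIntegralOn f μ Set.univ J ↔ HasOHIntegralOn f μ Set.univ J := by
  constructor
  · rintro ⟨b, hb, γ, hγ, H⟩
    exact ⟨b, hb, γ, hγ, fun n P _ hfine => H n P hfine⟩
  · rintro ⟨b, hb, γ, hγ, H⟩
    refine ⟨b, hb, γ, hγ, fun n P hfine => ?_⟩
    obtain ⟨Q, hQH, hQfine, hQsum⟩ :=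
      exists_henstock_of_free μ f (γ n) (hγ n) P hfine
    rw [← hQsum]
    exact H n Q hQH hQfine
end
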